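/- arXiv:2010.08572 — 6 statements merged into one kernel-verified Lean document; each statement's English description precedes it below -/
import Mathlib

section
/- Suppose A_c := A − BK is Schur-stable. Then for every z ∈ ℂ with |z| = 1, the doubly infinite series ∑_{d ∈ ℤ} z^{-d} T_d (with real matrices viewed as complex matrices) converges and its sum equals the matrix symbol sym(z) = (z(zI − A_c)^{-1}B)^* Q_c (z(zI − A_c)^{-1}B) + R. -/
open Matrix Filter Topology
open scoped Kronecker

/-- `A` is Schur-stable: every complex eigenvalue has modulus `< 1`. -/
def SchurStable {n : ℕ} (A : Matrix (Fin n) (Fin n) ℝ) : Prop :=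
  ∀ μ ∈ spectrum ℂ (A.map Complex.ofReal), ‖μ‖ < 1

/-- The `d`-th block of the infinite block-Toeplitz matrix associated with the
condensed Hessian. -/
noncomputable def Tblk {n m : ℕ} (Ac : Matrix (Fin n) (Fin n) ℝ)
    (B : Matrix (Fin n) (Fin m) ℝ) (Qc : Matrix (Fin n) (Fin n) ℝ)
    (R : Matrix (Fin m) (Fin m) ℝ) (d : ℤ) : Matrix (Fin m) (Fin m) ℝ :=
  if 0 ≤ d then
    (∑' i : ℕ, Bᵀ * (Acᵀ) ^ i * Qc * Ac ^ (i + d.toNat) * B) + (if d = 0 then R else 0)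
  else
    ((∑' i : ℕ, Bᵀ * (Acᵀ) ^ i * Qc * Ac ^ (i + (-d).toNat) * B))ᵀ

/-- The `(j,k)` block (for `j ≥ k`) of the condensed Hessian with horizon `N`. -/
noncomputable def Hge {n m : ℕ} (Ac : Matrix (Fin n) (Fin n) ℝ)
    (B : Matrix (Fin n) (Fin m) ℝ) (Qc P : Matrix (Fin n) (Fin n) ℝ)
    (R : Matrix (Fin m) (Fin m) ℝ) (N j k : ℕ) : Matrix (Fin m) (Fin m) ℝ :=
  (∑ i ∈ Finset.range (N - j), Bᵀ * (Acᵀ) ^ i * Qc * Ac ^ (i + j - k) * B)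
    + Bᵀ * (Acᵀ) ^ (N - j) * P * Ac ^ (N - k) * B + (if j = k then R else 0)

/-- The condensed Hessian with horizon `N`, as an `Nm × Nm` real matrix. -/
noncomputable def Hmat {n m : ℕ} (Ac : Matrix (Fin n) (Fin n) ℝ)
    (B : Matrix (Fin n) (Fin m) ℝ) (Qc P : Matrix (Fin n) (Fin n) ℝ)
    (R : Matrix (Fin m) (Fin m) ℝ) (N : ℕ) :
    Matrix (Fin N × Fin m) (Fin N × Fin m) ℝ :=
  Matrix.of fun p q =>
    if (q.1 : ℕ) ≤ (p.1 : ℕ) then Hge Ac B Qc P R N p.1 q.1 p.2 q.2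
    else (Hge Ac B Qc P R N q.1 p.1)ᵀ p.2 q.2

/-- The matrix symbol of the condensed Hessian. -/
noncomputable def symb {n m : ℕ} (Ac : Matrix (Fin n) (Fin n) ℝ)
    (B : Matrix (Fin n) (Fin m) ℝ) (Qc : Matrix (Fin n) (Fin n) ℝ)
    (R : Matrix (Fin m) (Fin m) ℝ) (z : ℂ) : Matrix (Fin m) (Fin m) ℂ :=
  (z • ((z • (1 : Matrix (Fin n) (Fin n) ℂ) - Ac.map Complex.ofReal)⁻¹
      * B.map Complex.ofReal))ᴴ
    * Qc.map Complex.ofReal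
    * (z • ((z • (1 : Matrix (Fin n) (Fin n) ℂ) - Ac.map Complex.ofReal)⁻¹
      * B.map Complex.ofReal))
  + R.map Complex.ofReal

section Helpers

variable {ι : Type*} {a b c : Type*} [Fintype a] [Fintype b] [Fintype c]

omit [Fintype a] [Fintype b] in
lemma mhasSum_iff {α : Type*} [AddCommMonoid α] [TopologicalSpace α]
    {f : ι → Matrix a b α} {g : Matrix a b α} :
    HasSum f g ↔ ∀ i j, HasSum (fun k => f k i j) (g i j) := by
  exact (Pi.hasSum (f := f) (g := g)).trans (forall_congr' fun i => Pi.hasSum)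

omit [Fintype a] [Fintype b] in
lemma msummable_iff {α : Type*} [AddCommMonoid α] [TopologicalSpace α]
    {f : ι → Matrix a b α} :
    Summable f ↔ ∀ i j, Summable (fun k => f k i j) := by
  exact (Pi.summable (f := f)).trans (forall_congr' fun i => Pi.summable)

omit [Fintype a] [Fintype c] in
lemma HasSum.mmul_left {f : ι → Matrix b c ℂ} {S : Matrix b c ℂ} (h : HasSum f S)
    (X : Matrix a b ℂ) : HasSum (fun i => X * f i) (X * S) :=
  h.map (AddMonoidHom.mk' (fun M => X * M) fun _ _ => Matrix.mul_add X _ _)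
    (continuous_const.matrix_mul continuous_id)

omit [Fintype a] [Fintype c] in
lemma HasSum.mmul_right {f : ι → Matrix a b ℂ} {S : Matrix a b ℂ} (h : HasSum f S)
    (X : Matrix b c ℂ) : HasSum (fun i => f i * X) (S * X) :=
  h.map (AddMonoidHom.mk' (fun M => M * X) fun _ _ => Matrix.add_mul _ _ X)
    (continuous_id.matrix_mul continuous_const)

omit [Fintype a] [Fintype c] in
lemma entry_mul_le (X : Matrix a b ℂ) (Y : Matrix b c ℂ) (i : a) (j : c) :
    ‖(X * Y) i j‖ ≤ ∑ l, ‖X i l‖ * ‖Y l j‖ := by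
  rw [Matrix.mul_apply]
  exact (norm_sum_le _ _).trans (le_of_eq (by simp [norm_mul]))

omit [Fintype a] [Fintype c] in
lemma entry_mul_bound {X : Matrix a b ℂ} {Y : Matrix b c ℂ} {x y : ℝ}
    (hX : ∀ i j, ‖X i j‖ ≤ x) (hY : ∀ i j, ‖Y i j‖ ≤ y) (i : a) (j : c) :
    ‖(X * Y) i j‖ ≤ (Fintype.card b : ℝ) * x * y := by
  refine (entry_mul_le X Y i j).trans ?_
  have : ∀ l : b, ‖X i l‖ * ‖Y l j‖ ≤ x * y := fun l =>
    mul_le_mul (hX i l) (hY l j) (norm_nonneg _) ((norm_nonneg _).trans (hX i l))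
  calc ∑ l, ‖X i l‖ * ‖Y l j‖ ≤ ∑ _l : b, x * y := Finset.sum_le_sum fun l _ => this l
    _ = (Fintype.card b : ℝ) * x * y := by
        simp [Finset.sum_const, Finset.card_univ, mul_assoc]

omit [Fintype a] [Fintype b] in
lemma hasSum_cmap {f : ι → Matrix a b ℝ} {g : Matrix a b ℝ} (h : HasSum f g) :
    HasSum (fun i => (f i).map Complex.ofReal) (g.map Complex.ofReal) :=
  h.map (AddMonoidHom.mk' (fun M : Matrix a b ℝ => M.map Complex.ofReal)
      (fun x y => by ext i j; simp [Matrix.map_apply]))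
    (continuous_id.matrix_map Complex.continuous_ofReal)

omit [Fintype a] [Fintype c] in
lemma cmap_mul (X : Matrix a b ℝ) (Y : Matrix b c ℝ) :
    (X * Y).map Complex.ofReal = X.map Complex.ofReal * Y.map Complex.ofReal := by
  ext i j
  simp [Matrix.mul_apply, Matrix.map_apply]

lemma cmap_pow (X : Matrix a a ℝ) [DecidableEq a] (k : ℕ) :
    (X ^ k).map Complex.ofReal = (X.map Complex.ofReal) ^ k := by
  induction k with
  | zero => ext i j; by_cases h : i = j <;> simp [Matrix.map_apply, Matrix.one_apply, h]
  | succ k ih => rw [pow_succ, pow_succ, cmap_mul, ih]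

omit [Fintype a] [Fintype b] in
lemma cmap_conjTranspose (M : Matrix a b ℝ) :
    (M.map Complex.ofReal)ᴴ = Mᵀ.map Complex.ofReal := by
  ext i j
  simp [Matrix.conjTranspose_apply, Matrix.map_apply, Complex.conj_ofReal]

end Helpers

section geo
variable {n : ℕ}
attribute [local instance] Matrix.linftyOpNormedAddCommGroup Matrix.linftyOpNormedRing
  Matrix.linftyOpNormedAlgebra

lemma nnnorm_entry_le' (M : Matrix (Fin n) (Fin n) ℂ) (i j : Fin n) : ‖M i j‖₊ ≤ ‖M‖₊ := by
  rw [Matrix.linfty_opNNNorm_def]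
  refine le_trans (Finset.single_le_sum (f := fun j => ‖M i j‖₊) (fun _ _ => by positivity)
    (Finset.mem_univ j)) ?_
  exact Finset.le_sup (f := fun i => ∑ j, ‖M i j‖₊) (Finset.mem_univ i)

lemma geo_bound (Ac : Matrix (Fin n) (Fin n) ℝ)
    (hstab : ∀ μ ∈ spectrum ℂ (Ac.map Complex.ofReal), ‖μ‖ < 1) :
    ∃ C r : ℝ, 0 < C ∧ 0 < r ∧ r < 1 ∧
      ∀ (k : ℕ) (i j : Fin n), ‖((Ac.map Complex.ofReal) ^ k) i j‖ ≤ C * r ^ k := by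
  set A' : Matrix (Fin n) (Fin n) ℂ := Ac.map Complex.ofReal
  haveI : CompleteSpace (Matrix (Fin n) (Fin n) ℂ) := FiniteDimensional.complete ℂ _
  have hfin := Matrix.finite_spectrum (R := ℂ) A'
  set b : NNReal := hfin.toFinset.sup (fun μ => ‖μ‖₊) with hb
  have hblt : b < 1 := by
    rcases Finset.eq_empty_or_nonempty hfin.toFinset with h | h
    · simp [hb, h]
    · rw [hb, Finset.sup_lt_iff (by norm_num : (⊥ : NNReal) < 1)]
      intro μ hμ
      have := hstab μ (hfin.mem_toFinset.mp hμ)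
      simpa [← NNReal.coe_lt_coe] using this
  have hρ : spectralRadius ℂ A' < 1 := by
    rw [spectralRadius]
    calc ⨆ μ ∈ spectrum ℂ A', (‖μ‖₊ : ENNReal) ≤ (b : ENNReal) := by
          refine iSup₂_le fun μ hμ => ?_
          exact_mod_cast Finset.le_sup (f := fun μ => ‖μ‖₊) (hfin.mem_toFinset.mpr hμ)
      _ < 1 := by exact_mod_cast hblt
  obtain ⟨r₀, hr₀1, hr₀2⟩ := ENNReal.lt_iff_exists_nnreal_btwn.mp hρ
  set r : NNReal := max r₀ (1/2) with hrdef
  have hrρ : spectralRadius ℂ A' < (r : ENNReal) :=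
    lt_of_lt_of_le hr₀1 (by exact_mod_cast le_max_left _ _)
  have h1' : r₀ < 1 := by exact_mod_cast hr₀2
  have hr1 : r < 1 := max_lt h1' (by rw [← NNReal.coe_lt_coe]; norm_num)
  have hrpos : 0 < r := lt_of_lt_of_le (by rw [← NNReal.coe_lt_coe]; norm_num) (le_max_right _ _)
  have hgel := spectrum.pow_nnnorm_pow_one_div_tendsto_nhds_spectralRadius A'
  have hev : ∀ᶠ k : ℕ in atTop, (‖A' ^ k‖₊ : ENNReal) ^ (1/(k:ℝ)) < (r : ENNReal) :=
    hgel.eventually_lt_const hrρ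
  obtain ⟨K, hK⟩ := (hev.and (eventually_ge_atTop 1)).exists_forall_of_atTop
  have hbig : ∀ k, K ≤ k → ‖A' ^ k‖ ≤ (r:ℝ) ^ k := by
    intro k hk
    obtain ⟨h1, h2⟩ := hK k hk
    have hkpos : (0:ℝ) < k := by exact_mod_cast h2
    have h3 : (‖A' ^ k‖₊ : ENNReal) < (r : ENNReal) ^ ((k:ℕ):ℝ) := by
      have := ENNReal.rpow_lt_rpow h1 hkpos
      rwa [← ENNReal.rpow_mul, one_div, inv_mul_cancel₀ (ne_of_gt hkpos),
        ENNReal.rpow_one] at this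
    rw [ENNReal.rpow_natCast] at h3
    have h4 : ‖A' ^ k‖₊ ≤ r ^ k := by exact_mod_cast h3.le
    exact_mod_cast h4
  obtain ⟨S, hS0, hSle⟩ : ∃ S : ℝ, 0 ≤ S ∧ ∀ k < K, ‖A' ^ k‖ / (r:ℝ) ^ k ≤ S := by
    refine ⟨∑ l ∈ Finset.range K, ‖A' ^ l‖ / (r:ℝ) ^ l,
      Finset.sum_nonneg fun l _ => by positivity, fun k hk => ?_⟩
    exact Finset.single_le_sum (f := fun l => ‖A' ^ l‖ / (r:ℝ) ^ l)
      (fun l _ => by positivity) (Finset.mem_range.mpr hk)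
  have hrR : (0:ℝ) < (r:ℝ) := by exact_mod_cast hrpos
  refine ⟨1 + S, r, by linarith, hrR, by exact_mod_cast hr1, ?_⟩
  intro k i j
  have hentry : ‖(A' ^ k) i j‖ ≤ ‖A' ^ k‖ := by
    have := nnnorm_entry_le' (A' ^ k) i j
    exact_mod_cast this
  refine hentry.trans ?_
  have hrk : (0:ℝ) < (r:ℝ) ^ k := pow_pos hrR k
  rcases le_or_gt K k with h | h
  · refine (hbig k h).trans ?_
    nlinarith
  · have := hSle k h
    calc ‖A' ^ k‖ = (‖A' ^ k‖ / (r:ℝ) ^ k) * (r:ℝ) ^ k := by field_simp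
      _ ≤ (1 + S) * (r:ℝ) ^ k := by nlinarith
end geo

/-- reindexing of `ℕ × ℕ` by (difference, offset) -/
def zEquiv : ℤ × ℕ ≃ ℕ × ℕ where
  toFun p := if 0 ≤ p.1 then (p.2, p.2 + p.1.toNat) else (p.2 + (-p.1).toNat, p.2)
  invFun q := ((q.2 : ℤ) - (q.1 : ℤ), min q.1 q.2)
  left_inv := by
    rintro ⟨d, i⟩
    by_cases h : 0 ≤ d <;> simp only [h, if_true, if_false] <;> ext <;> simp <;> omega
  right_inv := by
    rintro ⟨j, k⟩
    by_cases h : (0:ℤ) ≤ (k:ℤ) - (j:ℤ) <;> simp only [h, if_true, if_false] <;> ext <;>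
      simp <;> omega

/-- If `A - B*K` is Schur-stable, the doubly infinite series `∑_{d∈ℤ} z^{-d} T_d`
converges for every `z` on the unit circle, with sum equal to the matrix symbol
`(z(zI-A_c)⁻¹B)^* Q_c (z(zI-A_c)⁻¹B) + R`. -/
theorem stmt3 {n m : ℕ} (hn : 0 < n) (hm : 0 < m)
    (A : Matrix (Fin n) (Fin n) ℝ) (B : Matrix (Fin n) (Fin m) ℝ)
    (K : Matrix (Fin m) (Fin n) ℝ)
    (Q : Matrix (Fin n) (Fin n) ℝ) (R : Matrix (Fin m) (Fin m) ℝ)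
    (hQ : Q.PosSemidef) (hR : R.PosDef)
    (hstab : SchurStable (A - B * K)) :
    ∀ z : ℂ, ‖z‖ = 1 →
      HasSum
        (fun d : ℤ =>
          z ^ (-d) • ((Tblk (A - B * K) B (Q + Kᵀ * R * K) R d).map Complex.ofReal))
        (symb (A - B * K) B (Q + Kᵀ * R * K) R z) := by
  intro z hz
  classical
  set Ac : Matrix (Fin n) (Fin n) ℝ := A - B * K with hAcdef
  set Qc : Matrix (Fin n) (Fin n) ℝ := Q + Kᵀ * R * K with hQcdef
  set A' : Matrix (Fin n) (Fin n) ℂ := Ac.map Complex.ofReal with hA'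
  set B' : Matrix (Fin n) (Fin m) ℂ := B.map Complex.ofReal with hB'
  set Q' : Matrix (Fin n) (Fin n) ℂ := Qc.map Complex.ofReal with hQ'
  haveI : T3Space (Matrix (Fin m) (Fin m) ℂ) := inferInstanceAs (T3Space (Fin m → Fin m → ℂ))
  have hz0 : z ≠ 0 := by
    intro h; rw [h] at hz; simp at hz
  have hz1 : z * z⁻¹ = 1 := mul_inv_cancel₀ hz0
  have hzinv : ‖z⁻¹‖ = 1 := by rw [norm_inv, hz]; norm_num
  have hznorm : ∀ k : ℕ, ‖z⁻¹ ^ k‖ = 1 := fun k => by rw [norm_pow, hzinv, one_pow]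
  have hconj : (starRingEnd ℂ) z = z⁻¹ := by
    have h1 : z * (starRingEnd ℂ) z = 1 := by
      rw [Complex.mul_conj]
      norm_cast
      rw [Complex.normSq_eq_norm_sq, hz]; norm_num
    exact eq_inv_of_mul_eq_one_left (by rwa [mul_comm] at h1)
  have hstar : ∀ p : ℕ, star (z⁻¹ ^ p) = z ^ p := by
    intro p
    rw [star_pow, star_inv₀, Complex.star_def, hconj, inv_inv]
  -- geometric entry bounds
  obtain ⟨C, r, hC0, hr0, hr1, hAk⟩ := geo_bound Ac hstab
  obtain ⟨CB, hCB0, hCB⟩ : ∃ CB : ℝ, 0 ≤ CB ∧ ∀ i j, ‖B' i j‖ ≤ CB := by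
    refine ⟨∑ i, ∑ j, ‖B' i j‖,
      Finset.sum_nonneg fun _ _ => Finset.sum_nonneg fun _ _ => norm_nonneg _, fun i j => ?_⟩
    refine le_trans ?_ (Finset.single_le_sum (f := fun i => ∑ j, ‖B' i j‖)
      (fun _ _ => Finset.sum_nonneg fun _ _ => norm_nonneg _) (Finset.mem_univ i))
    exact Finset.single_le_sum (f := fun j => ‖B' i j‖)
      (fun _ _ => norm_nonneg _) (Finset.mem_univ j)
  obtain ⟨CQ, hCQ0, hCQ⟩ : ∃ CQ : ℝ, 0 ≤ CQ ∧ ∀ i j, ‖Q' i j‖ ≤ CQ := by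
    refine ⟨∑ i, ∑ j, ‖Q' i j‖,
      Finset.sum_nonneg fun _ _ => Finset.sum_nonneg fun _ _ => norm_nonneg _, fun i j => ?_⟩
    refine le_trans ?_ (Finset.single_le_sum (f := fun i => ∑ j, ‖Q' i j‖)
      (fun _ _ => Finset.sum_nonneg fun _ _ => norm_nonneg _) (Finset.mem_univ i))
    exact Finset.single_le_sum (f := fun j => ‖Q' i j‖)
      (fun _ _ => norm_nonneg _) (Finset.mem_univ j)
  have hBT : ∀ i j, ‖B'ᵀ i j‖ ≤ CB := fun i j => hCB j i
  have hATk : ∀ (k : ℕ) i j, ‖((A'ᵀ) ^ k) i j‖ ≤ C * r ^ k := by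
    intro k i j
    rw [← Matrix.transpose_pow, Matrix.transpose_apply]
    exact hAk k j i
  have hmapM : ∀ p q : ℕ, (Bᵀ * Acᵀ ^ p * Qc * Ac ^ q * B).map Complex.ofReal
      = B'ᵀ * (A'ᵀ) ^ p * Q' * A' ^ q * B' := by
    intro p q
    rw [cmap_mul, cmap_mul, cmap_mul, cmap_mul, cmap_pow, cmap_pow, hA', hB', hQ',
      Matrix.transpose_map, Matrix.transpose_map]
  have hub : ∀ (q : ℕ) (i : Fin n) (j : Fin m), ‖(A' ^ q * B') i j‖ ≤ (n:ℝ) * (C * r ^ q) * CB :=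
    fun q i j => by simpa using entry_mul_bound (hAk q) hCB i j
  have hD0 : (0:ℝ) ≤ (n:ℝ)^4 * C * C * CQ * CB * CB := by
    have := hC0.le
    apply_rules [mul_nonneg, pow_nonneg, Nat.cast_nonneg]
  have hP : ∀ (p q : ℕ) (i j : Fin m), ‖(B'ᵀ * (A'ᵀ) ^ p * Q' * A' ^ q * B') i j‖
      ≤ ((n:ℝ)^4 * C * C * CQ * CB * CB) * (r ^ p * r ^ q) := by
    intro p q i j
    have e2 : ∀ (i : Fin n) (j : Fin m), ‖(Q' * (A' ^ q * B')) i j‖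
        ≤ (n:ℝ) * CQ * ((n:ℝ) * (C * r ^ q) * CB) := fun i j => by
      simpa using entry_mul_bound hCQ (hub q) i j
    have e3 : ∀ (i : Fin n) (j : Fin m), ‖((A'ᵀ) ^ p * (Q' * (A' ^ q * B'))) i j‖
        ≤ (n:ℝ) * (C * r ^ p) * ((n:ℝ) * CQ * ((n:ℝ) * (C * r ^ q) * CB)) := fun i j => by
      simpa using entry_mul_bound (hATk p) e2 i j
    have e4 : ‖(B'ᵀ * ((A'ᵀ) ^ p * (Q' * (A' ^ q * B')))) i j‖
        ≤ (n:ℝ) * CB * ((n:ℝ) * (C * r ^ p) * ((n:ℝ) * CQ * ((n:ℝ) * (C * r ^ q) * CB))) := by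
      simpa using entry_mul_bound hBT e3 i j
    have hassoc : B'ᵀ * (A'ᵀ) ^ p * Q' * A' ^ q * B'
        = B'ᵀ * ((A'ᵀ) ^ p * (Q' * (A' ^ q * B'))) := by
      simp only [Matrix.mul_assoc]
    rw [hassoc]
    refine e4.trans (le_of_eq ?_)
    ring
  -- the Neumann series
  set v : ℕ → Matrix (Fin n) (Fin n) ℂ := fun k => z⁻¹ ^ k • A' ^ k with hv
  set u : ℕ → Matrix (Fin n) (Fin m) ℂ := fun k => z⁻¹ ^ k • (A' ^ k * B') with hu
  have hvsum : Summable v := by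
    rw [msummable_iff]; intro i j
    refine Summable.of_norm_bounded (g := fun k => C * r ^ k)
      ((summable_geometric_of_lt_one hr0.le hr1).mul_left C) fun k => ?_
    rw [hv]
    simp only [Matrix.smul_apply, smul_eq_mul, norm_mul, hznorm, one_mul]
    exact hAk k i j
  have husum : Summable u := by
    rw [msummable_iff]; intro i j
    refine Summable.of_norm_bounded (g := fun k => ((n:ℝ) * C * CB) * r ^ k)
      ((summable_geometric_of_lt_one hr0.le hr1).mul_left _) fun k => ?_
    rw [hu]
    simp only [Matrix.smul_apply, smul_eq_mul, norm_mul, hznorm, one_mul]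
    refine (hub k i j).trans (le_of_eq ?_)
    ring
  set Nmat : Matrix (Fin n) (Fin n) ℂ := ∑' k, v k with hNmat
  have hN : HasSum v Nmat := hvsum.hasSum
  set Smat : Matrix (Fin n) (Fin m) ℂ := Nmat * B' with hSmat
  have hS : HasSum u Smat := by
    have h := hN.mmul_right B'
    have he : (fun k => v k * B') = u := by
      funext k
      rw [hu, hv]
      simp only [Matrix.smul_mul]
    rwa [he] at h
  -- telescoping identity
  have hzz : ∀ k : ℕ, z * z⁻¹ ^ (k+1) = z⁻¹ ^ k := by
    intro k
    rw [pow_succ]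
    calc z * (z⁻¹ ^ k * z⁻¹) = (z * z⁻¹) * z⁻¹ ^ k := by ring
      _ = z⁻¹ ^ k := by rw [hz1, one_mul]
  set fz : ℕ → Matrix (Fin n) (Fin n) ℂ := fun k => z • v k with hfz
  have hterm2 : ∀ k, (z • (1:Matrix (Fin n) (Fin n) ℂ) - A') * v k = fz k - fz (k+1) := by
    intro k
    rw [Matrix.sub_mul, hfz, hv]
    simp only
    rw [Matrix.smul_mul, Matrix.one_mul, Matrix.mul_smul, smul_smul, smul_smul, hzz k,
      ← pow_succ']
  have hmulN : HasSum (fun k => (z • (1:Matrix (Fin n) (Fin n) ℂ) - A') * v k)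
      ((z • (1:Matrix (Fin n) (Fin n) ℂ) - A') * Nmat) := hN.mmul_left _
  have htend1 := hmulN.tendsto_sum_nat
  have hv0 : Tendsto v atTop (𝓝 0) := hvsum.tendsto_atTop_zero
  have hfz0 : Tendsto fz atTop (𝓝 (0 : Matrix (Fin n) (Fin n) ℂ)) := by
    have h := hv0.const_smul z
    rw [smul_zero] at h
    exact h
  have htend2 : Tendsto (fun K : ℕ => ∑ k ∈ Finset.range K,
      ((z • (1:Matrix (Fin n) (Fin n) ℂ) - A') * v k)) atTop (𝓝 (fz 0)) := by
    have heq : ∀ K : ℕ, ∑ k ∈ Finset.range K, ((z • (1:Matrix (Fin n) (Fin n) ℂ) - A') * v k)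
        = fz 0 - fz K := by
      intro K
      rw [Finset.sum_congr rfl fun k _ => hterm2 k]
      exact Finset.sum_range_sub' fz K
    have h := Tendsto.sub (tendsto_const_nhds (x := fz 0)) hfz0
    rw [sub_zero] at h
    simpa only [heq] using h
  have hNid : (z • (1:Matrix (Fin n) (Fin n) ℂ) - A') * Nmat = z • 1 := by
    rw [tendsto_nhds_unique htend1 htend2, hfz, hv]
    simp
  -- invertibility
  have hzU : IsUnit (z • (1:Matrix (Fin n) (Fin n) ℂ) - A') := by
    have hznot : z ∉ spectrum ℂ A' := fun hmem => absurd (hstab z hmem) (by rw [hz]; exact lt_irrefl 1)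
    have h := spectrum.notMem_iff.mp hznot
    rwa [Algebra.algebraMap_eq_smul_one] at h
  have hdet : IsUnit (z • (1:Matrix (Fin n) (Fin n) ℂ) - A').det :=
    (Matrix.isUnit_iff_isUnit_det _).mp hzU
  have hNinv : Nmat = z • (z • (1:Matrix (Fin n) (Fin n) ℂ) - A')⁻¹ := by
    have h1 : (z • (1:Matrix (Fin n) (Fin n) ℂ) - A')⁻¹
        * ((z • (1:Matrix (Fin n) (Fin n) ℂ) - A') * Nmat) = Nmat := by
      rw [← Matrix.mul_assoc, Matrix.nonsing_inv_mul _ hdet, Matrix.one_mul]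
    rw [← h1, hNid, Matrix.mul_smul, Matrix.mul_one]
  have hsymb : symb Ac B Qc R z = Smatᴴ * Q' * Smat + R.map Complex.ofReal := by
    have hG : z • ((z • (1:Matrix (Fin n) (Fin n) ℂ) - A')⁻¹ * B') = Smat := by
      rw [hSmat, hNinv, Matrix.smul_mul]
    rw [symb, ← hA', ← hB', ← hQ', hG]
  -- symmetry of Qc
  have hQsym : Qᵀ = Q := by
    have h := hQ.1
    ext i j
    rw [Matrix.transpose_apply]
    conv_rhs => rw [← h]
    simp [Matrix.conjTranspose_apply]
  have hRsym : Rᵀ = R := by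
    have h := hR.1
    ext i j
    rw [Matrix.transpose_apply]
    conv_rhs => rw [← h]
    simp [Matrix.conjTranspose_apply]
  have hQcsym : Qcᵀ = Qc := by
    rw [hQcdef]
    simp [Matrix.transpose_add, Matrix.transpose_mul, Matrix.transpose_transpose, hQsym, hRsym,
      Matrix.mul_assoc]
  -- the central algebraic identity
  have hterm : ∀ p q : ℕ, (u p)ᴴ * Q' * u q
      = (z ^ p * z⁻¹ ^ q) • ((Bᵀ * Acᵀ ^ p * Qc * Ac ^ q * B).map Complex.ofReal) := by
    intro p q
    have h1 : (u p)ᴴ = z ^ p • ((Bᵀ * Acᵀ ^ p).map Complex.ofReal) := by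
      rw [hu]
      simp only
      rw [Matrix.conjTranspose_smul, hstar p]
      congr 1
      rw [show A' ^ p * B' = ((Ac ^ p) * B).map Complex.ofReal by
        rw [cmap_mul, cmap_pow, hA', hB']]
      rw [cmap_conjTranspose, Matrix.transpose_mul, Matrix.transpose_pow]
    have h2 : u q = z⁻¹ ^ q • ((Ac ^ q * B).map Complex.ofReal) := by
      rw [hu]
      simp only
      rw [cmap_mul, cmap_pow, hA', hB']
    rw [h1, h2, Matrix.smul_mul, Matrix.smul_mul, Matrix.mul_smul, smul_smul]
    congr 1
    rw [hQ', ← cmap_mul, ← cmap_mul]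
    congr 1
    simp only [Matrix.mul_assoc]
  -- the double series over ℕ × ℕ
  set F : ℕ × ℕ → Matrix (Fin m) (Fin m) ℂ := fun p => (u p.1)ᴴ * Q' * u p.2 with hF
  have hFsummable : Summable F := by
    rw [msummable_iff]; intro i j
    refine Summable.of_norm_bounded
      (g := fun p : ℕ × ℕ => (((n:ℝ)^4 * C * C * CQ * CB * CB) * r ^ p.1) * r ^ p.2) ?_ ?_
    · exact ((summable_geometric_of_lt_one hr0.le hr1).mul_left _).mul_of_nonneg
        (summable_geometric_of_lt_one hr0.le hr1)
        (fun k => mul_nonneg hD0 (pow_nonneg hr0.le k)) (fun k => pow_nonneg hr0.le k)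
    · rintro ⟨p, q⟩
      rw [hF]
      simp only
      rw [hterm p q, hmapM, Matrix.smul_apply, norm_smul]
      have hn1 : ‖z ^ p * z⁻¹ ^ q‖ = 1 := by
        rw [norm_mul, norm_pow, norm_pow, hz, hzinv]; simp
      rw [hn1, one_mul]
      refine (hP p q i j).trans (le_of_eq ?_)
      ring
  have hFtsum : HasSum F (∑' p, F p) := hFsummable.hasSum
  have hfib : ∀ p : ℕ, HasSum (fun k => F (p, k)) ((u p)ᴴ * Q' * Smat) :=
    fun p => hS.mmul_left ((u p)ᴴ * Q')
  have hSH : HasSum (fun j => (u j)ᴴ) Smatᴴ := hS.matrix_conjTranspose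
  have houter : HasSum (fun p => (u p)ᴴ * Q' * Smat) (Smatᴴ * Q' * Smat) := by
    have h := hSH.mmul_right (Q' * Smat)
    simpa only [Matrix.mul_assoc] using h
  have hFS : HasSum F (Smatᴴ * Q' * Smat) := by
    have h1 : HasSum (fun p => (u p)ᴴ * Q' * Smat) (∑' p, F p) := hFtsum.prod_fiberwise hfib
    rwa [h1.unique houter] at hFtsum
  have hFe : HasSum (F ∘ zEquiv) (Smatᴴ * Q' * Smat) := (zEquiv.hasSum_iff).mpr hFS
  -- summability of the real fiber series
  have hMsum : ∀ e : ℕ, Summable (fun i : ℕ => Bᵀ * Acᵀ ^ i * Qc * Ac ^ (i+e) * B) := by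
    intro e
    rw [msummable_iff]; intro a b'
    refine Summable.of_norm_bounded (g := fun i => ((n:ℝ)^4 * C * C * CQ * CB * CB) * r ^ i)
      ((summable_geometric_of_lt_one hr0.le hr1).mul_left _) fun i => ?_
    have hmapn : ‖((Bᵀ * Acᵀ ^ i * Qc * Ac ^ (i+e) * B).map Complex.ofReal) a b'‖
        = ‖(Bᵀ * Acᵀ ^ i * Qc * Ac ^ (i+e) * B) a b'‖ := by
      simp [Matrix.map_apply]
    rw [← hmapn, hmapM]
    refine (hP i (i+e) a b').trans ?_
    have h1 : r ^ (i+e) ≤ r ^ i := pow_le_pow_of_le_one hr0.le hr1.le (by omega)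
    have h2 : r ^ i ≤ 1 := pow_le_one₀ hr0.le hr1.le
    have h4 : r ^ i * r ^ (i+e) ≤ r ^ i * 1 :=
      mul_le_mul_of_nonneg_left (h1.trans h2) (pow_nonneg hr0.le i)
    rw [mul_one] at h4
    exact mul_le_mul_of_nonneg_left h4 hD0
  -- fiberwise sums over ℤ
  set Wr : ℤ → Matrix (Fin m) (Fin m) ℝ := fun d =>
    if 0 ≤ d then ∑' i : ℕ, Bᵀ * Acᵀ ^ i * Qc * Ac ^ (i + d.toNat) * B
    else (∑' i : ℕ, Bᵀ * Acᵀ ^ i * Qc * Ac ^ (i + (-d).toNat) * B)ᵀ with hWr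
  have hGfib : ∀ d : ℤ, HasSum (fun i => (F ∘ zEquiv) (d, i))
      (z ^ (-d) • ((Wr d).map Complex.ofReal)) := by
    intro d
    by_cases hd : 0 ≤ d
    · have hdn : ((d.toNat : ℤ)) = d := Int.toNat_of_nonneg hd
      have hzd : z ^ (-d) = z⁻¹ ^ d.toNat := by
        rw [← hdn, _root_.zpow_neg, zpow_natCast, inv_pow]
        congr 1
      have hcoef : ∀ i : ℕ, z ^ i * z⁻¹ ^ (i + d.toNat) = z ^ (-d) := by
        intro i
        rw [hzd, pow_add, ← mul_assoc, ← mul_pow, hz1, one_pow, one_mul]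
      have h0 := (hasSum_cmap (hMsum d.toNat).hasSum).const_smul (z ^ (-d))
      have heq : (fun i : ℕ => z ^ (-d) •
          ((Bᵀ * Acᵀ ^ i * Qc * Ac ^ (i + d.toNat) * B).map Complex.ofReal))
          = fun i => (F ∘ zEquiv) (d, i) := by
        funext i
        have hze : (zEquiv (d, i)) = (i, i + d.toNat) := by
          simp [zEquiv, hd]
        rw [Function.comp_apply, hze, hF]
        simp only
        rw [hterm i (i + d.toNat), hcoef i]
      rw [heq] at h0
      have hWd : Wr d = ∑' i : ℕ, Bᵀ * Acᵀ ^ i * Qc * Ac ^ (i + d.toNat) * B := by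
        rw [hWr]; simp [hd]
      rw [hWd]
      exact h0
    · set e : ℕ := (-d).toNat with he'
      have he : ((e : ℤ)) = -d := Int.toNat_of_nonneg (by omega)
      have hzd : z ^ (-d) = z ^ e := by rw [← he, zpow_natCast]
      have hcoef : ∀ i : ℕ, z ^ (i + e) * z⁻¹ ^ i = z ^ (-d) := by
        intro i
        rw [hzd, pow_add, mul_comm (z ^ i) (z ^ e), mul_assoc, ← mul_pow, hz1, one_pow, mul_one]
      have htr : ∀ i : ℕ, (Bᵀ * Acᵀ ^ i * Qc * Ac ^ (i+e) * B)ᵀ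
          = Bᵀ * Acᵀ ^ (i+e) * Qc * Ac ^ i * B := by
        intro i
        simp only [Matrix.transpose_mul, Matrix.transpose_transpose, Matrix.transpose_pow,
          hQcsym, Matrix.mul_assoc]
      have h0 := ((hMsum e).hasSum.matrix_transpose)
      rw [show (fun i : ℕ => (Bᵀ * Acᵀ ^ i * Qc * Ac ^ (i+e) * B)ᵀ)
          = fun i : ℕ => Bᵀ * Acᵀ ^ (i+e) * Qc * Ac ^ i * B from funext htr] at h0
      have h1 := (hasSum_cmap h0).const_smul (z ^ (-d))
      have heq : (fun i : ℕ => z ^ (-d) •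
          ((Bᵀ * Acᵀ ^ (i+e) * Qc * Ac ^ i * B).map Complex.ofReal))
          = fun i => (F ∘ zEquiv) (d, i) := by
        funext i
        have hze : (zEquiv (d, i)) = (i + e, i) := by
          simp [zEquiv, hd, he']
        rw [Function.comp_apply, hze, hF]
        simp only
        rw [hterm (i + e) i, hcoef i]
      rw [heq] at h1
      have hWd : Wr d = (∑' i : ℕ, Bᵀ * Acᵀ ^ i * Qc * Ac ^ (i + e) * B)ᵀ := by
        rw [hWr]; simp [hd, he']
      rw [hWd]
      exact h1
  have hWG : HasSum (fun d : ℤ => z ^ (-d) • ((Wr d).map Complex.ofReal))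
      (Smatᴴ * Q' * Smat) := hFe.prod_fiberwise hGfib
  have hRind : HasSum (fun d : ℤ => if d = 0 then R.map Complex.ofReal
      else (0 : Matrix (Fin m) (Fin m) ℂ)) (R.map Complex.ofReal) := hasSum_ite_eq 0 _
  have hfun : (fun d : ℤ => z ^ (-d) • ((Tblk Ac B Qc R d).map Complex.ofReal))
      = fun d : ℤ => z ^ (-d) • ((Wr d).map Complex.ofReal)
        + (if d = 0 then R.map Complex.ofReal else 0) := by
    funext d
    rw [Tblk, hWr]
    by_cases hd : 0 ≤ d
    · simp only [hd, if_true]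
      by_cases hd0 : d = 0
      · subst hd0
        simp only [if_true]
        rw [show ((∑' i : ℕ, Bᵀ * Acᵀ ^ i * Qc * Ac ^ (i + (0:ℤ).toNat) * B) + R).map
            Complex.ofReal = (∑' i : ℕ, Bᵀ * Acᵀ ^ i * Qc * Ac ^ (i + (0:ℤ).toNat) * B).map
            Complex.ofReal + R.map Complex.ofReal from by ext a b'; simp [Matrix.map_apply]]
        rw [smul_add]
        simp
      · simp only [hd0, if_false, add_zero]
    · have hd0 : d ≠ 0 := by omega
      simp only [hd, if_false, hd0, add_zero]
  rw [hfun, hsymb]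
  exact hWG.add hRind
end

section
/- Suppose A_c := A − BK is Schur-stable. Fix integers j ≥ k ≥ 0. Then the (j,k) block of the condensed Hessian with terminal weight P = Q converges, as the horizon N → ∞, to the Toeplitz block T_{j−k}; that is, lim_{N→∞} [ ∑_{i=0}^{N−1−j} Bᵀ(A_cᵀ)^i Q_c A_c^{i+j−k} B + (if j = k then R else 0) ] = T_{j−k}. -/
open Matrix Filter
open scoped Kronecker

open scoped NNReal ENNReal

section Aux
attribute [local instance] Matrix.linftyOpSeminormedAddCommGroup Matrix.linftyOpNormedRing
  Matrix.linftyOpNormedAlgebra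

variable {n m : ℕ}

private lemma entry_nnnorm_le (M : Matrix (Fin n) (Fin m) ℝ) (a : Fin n) (b : Fin m) :
    ‖M a b‖₊ ≤ ‖M‖₊ := by
  rw [Matrix.linfty_opNNNorm_def]
  exact le_trans (Finset.single_le_sum (f := fun j => ‖M a j‖₊) (fun j _ => zero_le)
    (Finset.mem_univ b))
    (Finset.le_sup (f := fun i => ∑ j, ‖M i j‖₊) (Finset.mem_univ a))

private lemma transpose_nnnorm_le (M : Matrix (Fin n) (Fin n) ℝ) :
    ‖Mᵀ‖₊ ≤ (n : ℝ≥0) * ‖M‖₊ := by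
  rw [Matrix.linfty_opNNNorm_def]
  apply Finset.sup_le
  intro a _
  calc ∑ j, ‖Mᵀ a j‖₊ ≤ ∑ _j : Fin n, ‖M‖₊ :=
        Finset.sum_le_sum fun j _ => entry_nnnorm_le M j a
    _ = (n : ℝ≥0) * ‖M‖₊ := by simp [Finset.sum_const, mul_comm]

private lemma nnnorm_map_ofReal (M : Matrix (Fin n) (Fin m) ℝ) :
    ‖M.map (Complex.ofReal)‖₊ = ‖M‖₊ := by
  simp [Matrix.linfty_opNNNorm_def, Matrix.map_apply]

private lemma schur_pow_bound (hn : 0 < n) (Ac : Matrix (Fin n) (Fin n) ℝ)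
    (h : SchurStable Ac) :
    ∃ r : ℝ≥0, r < 1 ∧ ∀ᶠ i : ℕ in atTop, ‖Ac ^ i‖₊ ≤ r ^ i := by
  haveI : Nonempty (Fin n) := Fin.pos_iff_nonempty.mp hn
  set M := Ac.map (Complex.ofReal) with hM
  have hρ : spectralRadius ℂ M < 1 := by
    have := spectrum.spectralRadius_lt_of_forall_lt M (r := 1) ?_
    · simpa using this
    · intro z hz
      have := h z hz
      simpa [← NNReal.coe_lt_coe, coe_nnnorm] using this
  obtain ⟨u, hu1, hu2⟩ := exists_between hρ
  have hut : u ≠ ⊤ := (hu2.trans_le le_top).ne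
  refine ⟨u.toNNReal, ?_, ?_⟩
  · have := ENNReal.toNNReal_lt_toNNReal hut (by simp : (1:ℝ≥0∞) ≠ ⊤)
    simpa using this.mpr hu2
  · have htend := spectrum.pow_nnnorm_pow_one_div_tendsto_nhds_spectralRadius M
    have hev := htend.eventually_lt_const hu1
    filter_upwards [hev, eventually_ge_atTop 1] with i hi hi1
    have hmp : (Ac ^ i).map Complex.ofReal = M ^ i := by
      have := map_pow (Complex.ofRealHom.mapMatrix) Ac i
      simpa [RingHom.mapMatrix_apply, hM, show (⇑Complex.ofRealHom : ℝ → ℂ) = Complex.ofReal from rfl] using this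
    have hMi : ‖Ac ^ i‖₊ = ‖M ^ i‖₊ := by
      rw [← hmp]; exact (nnnorm_map_ofReal _).symm
    rw [hMi]
    have hiR : (1 / (i:ℝ)) * (i:ℝ) = 1 := by
      field_simp
    have hx : (‖M ^ i‖₊ : ℝ≥0∞) = ((‖M ^ i‖₊ : ℝ≥0∞) ^ (1 / (i:ℝ))) ^ (i:ℕ) := by
      rw [← ENNReal.rpow_natCast _ i, ← ENNReal.rpow_mul, hiR, ENNReal.rpow_one]
    have hle : (‖M ^ i‖₊ : ℝ≥0∞) ≤ u ^ (i:ℕ) := by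
      rw [hx]
      exact pow_le_pow_left' hi.le i
    have : (‖M ^ i‖₊ : ℝ≥0∞) ≤ ((u.toNNReal : ℝ≥0∞)) ^ (i:ℕ) := by
      rwa [ENNReal.coe_toNNReal hut]
    rw [← ENNReal.coe_pow, ENNReal.coe_le_coe] at this
    exact this

private lemma key (hn : 0 < n) (Ac : Matrix (Fin n) (Fin n) ℝ)
    (B : Matrix (Fin n) (Fin m) ℝ) (Qc : Matrix (Fin n) (Fin n) ℝ) (d : ℕ)
    (h : SchurStable Ac) :
    ∃ C : ℝ, ∃ s : ℝ, 0 ≤ s ∧ s < 1 ∧ ∀ᶠ i : ℕ in atTop, ∀ a b : Fin m,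
      |(Bᵀ * (Acᵀ) ^ i * Qc * Ac ^ (i + d) * B) a b| ≤ C * s ^ i := by
  obtain ⟨r, hr1, hev⟩ := schur_pow_bound hn Ac h
  refine ⟨((‖Bᵀ‖₊ * n * ‖Qc‖₊ * ‖Ac ^ d‖₊ * ‖B‖₊ : ℝ≥0) : ℝ), ((r * r : ℝ≥0) : ℝ),
    (r * r).coe_nonneg, ?_, ?_⟩
  · have : r * r < 1 := by
      calc r * r ≤ r * 1 := mul_le_mul_right hr1.le r
        _ = r := mul_one r
        _ < 1 := hr1
    exact_mod_cast this
  · filter_upwards [hev] with i hi a b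
    have hbound : ‖(Bᵀ * (Acᵀ) ^ i * Qc * Ac ^ (i + d) * B) a b‖₊
        ≤ (‖Bᵀ‖₊ * n * ‖Qc‖₊ * ‖Ac ^ d‖₊ * ‖B‖₊) * (r * r) ^ i := by
      calc ‖(Bᵀ * (Acᵀ) ^ i * Qc * Ac ^ (i + d) * B) a b‖₊
          ≤ ‖Bᵀ * (Acᵀ) ^ i * Qc * Ac ^ (i + d) * B‖₊ := entry_nnnorm_le _ a b
        _ ≤ ‖Bᵀ * (Acᵀ) ^ i * Qc * Ac ^ (i + d)‖₊ * ‖B‖₊ := Matrix.linfty_opNNNorm_mul _ _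
        _ ≤ (‖Bᵀ * (Acᵀ) ^ i * Qc‖₊ * ‖Ac ^ (i + d)‖₊) * ‖B‖₊ :=
            mul_le_mul_left (Matrix.linfty_opNNNorm_mul _ _) _
        _ ≤ ((‖Bᵀ * (Acᵀ) ^ i‖₊ * ‖Qc‖₊) * ‖Ac ^ (i + d)‖₊) * ‖B‖₊ := by
            gcongr; exact Matrix.linfty_opNNNorm_mul _ _
        _ ≤ (((‖Bᵀ‖₊ * ‖(Acᵀ) ^ i‖₊) * ‖Qc‖₊) * ‖Ac ^ (i + d)‖₊) * ‖B‖₊ := by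
            gcongr; exact Matrix.linfty_opNNNorm_mul _ _
        _ ≤ (((‖Bᵀ‖₊ * ((n : ℝ≥0) * ‖Ac ^ i‖₊)) * ‖Qc‖₊) * (‖Ac ^ i‖₊ * ‖Ac ^ d‖₊)) * ‖B‖₊ := by
            gcongr
            · rw [← Matrix.transpose_pow]; exact transpose_nnnorm_le _
            · rw [pow_add]; exact Matrix.linfty_opNNNorm_mul _ _
        _ ≤ (((‖Bᵀ‖₊ * ((n : ℝ≥0) * r ^ i)) * ‖Qc‖₊) * (r ^ i * ‖Ac ^ d‖₊)) * ‖B‖₊ := by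
            gcongr <;> exact hi
        _ = (‖Bᵀ‖₊ * n * ‖Qc‖₊ * ‖Ac ^ d‖₊ * ‖B‖₊) * (r * r) ^ i := by
            ring
    rw [← Real.norm_eq_abs, ← coe_nnnorm]
    calc ((‖(Bᵀ * (Acᵀ) ^ i * Qc * Ac ^ (i + d) * B) a b‖₊ : ℝ≥0) : ℝ)
        ≤ (((‖Bᵀ‖₊ * n * ‖Qc‖₊ * ‖Ac ^ d‖₊ * ‖B‖₊) * (r * r) ^ i : ℝ≥0) : ℝ) :=
          NNReal.coe_le_coe.mpr hbound
      _ = ((‖Bᵀ‖₊ * n * ‖Qc‖₊ * ‖Ac ^ d‖₊ * ‖B‖₊ : ℝ≥0) : ℝ) * ((r * r : ℝ≥0) : ℝ) ^ i := by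
          push_cast; ring

end Aux

/-- If `A - B*K` is Schur-stable and `j ≥ k ≥ 0`, the `(j,k)` block of the condensed
Hessian with terminal weight `P = Q` converges, as the horizon `N → ∞`, to the
Toeplitz block `T_{j-k}`. -/
theorem stmt4 {n m : ℕ} (hn : 0 < n) (hm : 0 < m)
    (A : Matrix (Fin n) (Fin n) ℝ) (B : Matrix (Fin n) (Fin m) ℝ)
    (K : Matrix (Fin m) (Fin n) ℝ)
    (Q : Matrix (Fin n) (Fin n) ℝ) (R : Matrix (Fin m) (Fin m) ℝ)
    (hQ : Q.PosSemidef) (hR : R.PosDef)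
    (hstab : SchurStable (A - B * K))
    (j k : ℕ) (hjk : k ≤ j) :
    Filter.Tendsto
      (fun N : ℕ =>
        (∑ i ∈ Finset.range (N - j),
            Bᵀ * ((A - B * K)ᵀ) ^ i * (Q + Kᵀ * R * K) * (A - B * K) ^ (i + j - k) * B)
          + (if j = k then R else 0))
      atTop
      (nhds (Tblk (A - B * K) B (Q + Kᵀ * R * K) R ((j : ℤ) - (k : ℤ)))) := by
  have hd : ∀ i : ℕ, i + j - k = i + (j - k) := fun i => by omega
  obtain ⟨C, s, hs0, hs1, hev⟩ := key hn (A - B * K) B (Q + Kᵀ * R * K) (j - k) hstab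
  set F : ℕ → Matrix (Fin m) (Fin m) ℝ :=
    fun i => Bᵀ * ((A - B * K)ᵀ) ^ i * (Q + Kᵀ * R * K) * (A - B * K) ^ (i + (j - k)) * B
    with hF
  have hsum : Summable F := by
    refine Pi.summable.mpr fun a => Pi.summable.mpr fun b => ?_
    refine Summable.of_norm_bounded_eventually_nat (g := fun i => C * s ^ i)
      ((summable_geometric_of_lt_one hs0 hs1).mul_left C) ?_
    filter_upwards [hev] with i hi
    simpa [hF, Real.norm_eq_abs] using hi a b
  have hT : Tblk (A - B * K) B (Q + Kᵀ * R * K) R ((j : ℤ) - (k : ℤ))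
      = (∑' i, F i) + (if j = k then R else 0) := by
    rw [Tblk, if_pos (by omega : (0:ℤ) ≤ (j : ℤ) - (k : ℤ))]
    have ht : ((j : ℤ) - (k : ℤ)).toNat = j - k := by omega
    have hc : ((j : ℤ) - (k : ℤ) = 0) ↔ (j = k) := by omega
    rw [ht]
    congr 1
    exact if_congr hc rfl rfl
  rw [hT]
  have h1 : Tendsto (fun N : ℕ => ∑ i ∈ Finset.range (N - j), F i) atTop (nhds (∑' i, F i)) :=
    (hsum.hasSum.tendsto_sum_nat).comp (tendsto_sub_atTop_nat j)
  have h2 := h1.add (tendsto_const_nhds (x := if j = k then R else 0))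
  simpa only [hF, hd] using h2
end

section
/- Suppose A_c := A − BK is Schur-stable and P ∈ ℝ^{n×n} satisfies the Lyapunov equation A_cᵀ P A_c + Q_c = P. Then for every integer N ≥ 1 and all integers 0 ≤ k ≤ j ≤ N−1, the off-diagonal Hessian block plus its terminal correction collapses to an infinite sum that depends only on the difference j − k: ∑_{i=0}^{N−1−j} Bᵀ(A_cᵀ)^i Q_c A_c^{i+j−k} B + Bᵀ(A_cᵀ)^{N−j} P A_c^{N−k} B = ∑_{i=0}^∞ Bᵀ(A_cᵀ)^i Q_c A_c^{i+j−k} B. -/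
open Matrix Filter
open scoped Kronecker

section Aux

open scoped NNReal ENNReal

attribute [local instance] Matrix.frobeniusNormedAddCommGroup Matrix.frobeniusNormedRing
  Matrix.frobeniusNormedAlgebra

/-- Geometric decay of powers of a Schur-stable matrix (Frobenius norm). -/
theorem schur_geom {n : ℕ} (hn : 0 < n) (Ac : Matrix (Fin n) (Fin n) ℝ)
    (hst : SchurStable Ac) :
    ∃ r : ℝ, 0 < r ∧ r < 1 ∧ ∀ᶠ i : ℕ in atTop, ‖Ac ^ i‖ ≤ r ^ i := by
  haveI : Nonempty (Fin n) := ⟨⟨0, hn⟩⟩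
  set Aℂ : Matrix (Fin n) (Fin n) ℂ := Ac.map Complex.ofReal with hAℂ
  have hρ : spectralRadius ℂ Aℂ < (1 : ℝ≥0) := by
    refine spectrum.spectralRadius_lt_of_forall_lt Aℂ fun z hz => ?_
    have := hst z hz
    exact_mod_cast this
  obtain ⟨r, hr1, hr2⟩ := ENNReal.lt_iff_exists_nnreal_btwn.mp hρ
  have hr2' : (r : ℝ) < 1 := by exact_mod_cast hr2
  have hrpos : (0 : ℝ≥0∞) < r := lt_of_le_of_lt zero_le hr1
  have hrpos' : (0 : ℝ) < r := by exact_mod_cast hrpos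
  refine ⟨r, hrpos', hr2', ?_⟩
  have hG := spectrum.pow_nnnorm_pow_one_div_tendsto_nhds_spectralRadius Aℂ
  have hev : ∀ᶠ i : ℕ in atTop, (‖Aℂ ^ i‖₊ : ℝ≥0∞) ^ (1 / (i : ℝ)) < (r : ℝ≥0∞) :=
    hG.eventually_lt_const hr1
  filter_upwards [hev, eventually_ge_atTop 1] with i hi hi1
  have hiR : (i : ℝ) ≠ 0 := by positivity
  have hx : (‖Aℂ ^ i‖₊ : ℝ≥0∞) ≤ (r : ℝ≥0∞) ^ (i : ℕ) := by
    have h1 : ((‖Aℂ ^ i‖₊ : ℝ≥0∞) ^ (1 / (i : ℝ))) ^ (i : ℕ) ≤ (r : ℝ≥0∞) ^ (i : ℕ) :=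
      pow_le_pow_left' hi.le i
    rwa [← ENNReal.rpow_natCast ((‖Aℂ ^ i‖₊ : ℝ≥0∞) ^ (1 / (i : ℝ))),
      ← ENNReal.rpow_mul, one_div, inv_mul_cancel₀ hiR, ENNReal.rpow_one] at h1
  have hnorm : ‖Aℂ ^ i‖ ≤ (r : ℝ) ^ i := by
    have := hx
    rw [← ENNReal.coe_pow, ENNReal.coe_le_coe] at this
    exact_mod_cast this
  have hmap : Aℂ ^ i = (Ac ^ i).map Complex.ofReal := by
    rw [hAℂ]
    exact (map_pow (Complex.ofRealHom.mapMatrix) Ac i).symm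
  rwa [hmap, Matrix.frobenius_norm_map_eq _ _ (fun a => Complex.norm_real a)] at hnorm

/-- Telescoping partial sums from the Lyapunov equation. -/
theorem lyap_partial_sum {n m : ℕ} (Ac : Matrix (Fin n) (Fin n) ℝ)
    (B : Matrix (Fin n) (Fin m) ℝ) (Qc P : Matrix (Fin n) (Fin n) ℝ)
    (hP : Acᵀ * P * Ac + Qc = P) (d : ℕ) (M : ℕ) :
    ∑ i ∈ Finset.range M, Bᵀ * (Acᵀ) ^ i * Qc * Ac ^ (i + d) * B
      = Bᵀ * P * Ac ^ d * B - Bᵀ * (Acᵀ) ^ M * P * Ac ^ (M + d) * B := by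
  have hQ : Qc = P - Acᵀ * P * Ac := eq_sub_of_add_eq' hP
  induction M with
  | zero => simp
  | succ M ih =>
      rw [Finset.sum_range_succ, ih, hQ]
      have h1 : M + 1 + d = (M + d) + 1 := by omega
      rw [h1, pow_succ (Acᵀ) M, pow_succ' Ac (M + d)]
      simp only [Matrix.sub_mul, Matrix.mul_sub, Matrix.mul_assoc]
      abel

theorem lyap_hasSum {n m : ℕ} (hn : 0 < n) (Ac : Matrix (Fin n) (Fin n) ℝ)
    (hst : SchurStable Ac) (B : Matrix (Fin n) (Fin m) ℝ)
    (Qc P : Matrix (Fin n) (Fin n) ℝ) (hP : Acᵀ * P * Ac + Qc = P) (d : ℕ) :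
    HasSum (fun i : ℕ => Bᵀ * (Acᵀ) ^ i * Qc * Ac ^ (i + d) * B) (Bᵀ * P * Ac ^ d * B) := by
  obtain ⟨r, hr0, hr1, hev⟩ := schur_geom hn Ac hst
  set f : ℕ → Matrix (Fin m) (Fin m) ℝ :=
    fun i => Bᵀ * (Acᵀ) ^ i * Qc * Ac ^ (i + d) * B with hf
  have hbound : ∀ᶠ i : ℕ in atTop,
      ‖f i‖ ≤ (‖Bᵀ‖ * ‖Qc‖ * ‖B‖ * r ^ d) * (r * r) ^ i := by
    obtain ⟨i₀, hi₀⟩ := eventually_atTop.mp hev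
    refine eventually_atTop.mpr ⟨i₀, fun i hi => ?_⟩
    have h1 : ‖Ac ^ i‖ ≤ r ^ i := hi₀ i hi
    have h2 : ‖Ac ^ (i + d)‖ ≤ r ^ (i + d) := hi₀ (i + d) (le_trans hi (Nat.le_add_right _ _))
    have h3 : ‖(Acᵀ) ^ i‖ ≤ r ^ i := by
      rw [← Matrix.transpose_pow, Matrix.frobenius_norm_transpose]; exact h1
    calc ‖f i‖ ≤ ‖Bᵀ‖ * ‖(Acᵀ) ^ i‖ * ‖Qc‖ * ‖Ac ^ (i + d)‖ * ‖B‖ := by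
          refine le_trans (Matrix.frobenius_norm_mul _ _) ?_
          gcongr
          refine le_trans (Matrix.frobenius_norm_mul _ _) ?_
          gcongr
          refine le_trans (Matrix.frobenius_norm_mul _ _) ?_
          gcongr
          exact Matrix.frobenius_norm_mul _ _
      _ ≤ ‖Bᵀ‖ * r ^ i * ‖Qc‖ * r ^ (i + d) * ‖B‖ := by
          gcongr ‖Bᵀ‖ * ?_ * ‖Qc‖ * ?_ * ‖B‖ <;> first | exact h3 | exact h2
      _ = (‖Bᵀ‖ * ‖Qc‖ * ‖B‖ * r ^ d) * (r * r) ^ i := by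
          rw [pow_add, mul_pow]; ring
  have hq1 : r * r < 1 := by nlinarith
  have hgsum : Summable fun i : ℕ =>
      (‖Bᵀ‖ * ‖Qc‖ * ‖B‖ * r ^ d) * (r * r) ^ i :=
    (summable_geometric_of_lt_one (by positivity) hq1).mul_left _
  have hns : Summable fun i => ‖f i‖ := by
    refine Summable.of_norm_bounded_eventually_nat hgsum ?_
    filter_upwards [hbound] with i hi
    simpa using hi
  refine (hasSum_iff_tendsto_nat_of_summable_norm hns).mpr ?_
  have heq : ∀ M : ℕ, ∑ i ∈ Finset.range M, f i
      = Bᵀ * P * Ac ^ d * B - Bᵀ * (Acᵀ) ^ M * P * Ac ^ (M + d) * B :=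
    lyap_partial_sum Ac B Qc P hP d
  simp only [heq]
  have htail : Tendsto (fun M : ℕ => Bᵀ * (Acᵀ) ^ M * P * Ac ^ (M + d) * B) atTop
      (nhds 0) := by
    obtain ⟨i₀, hi₀⟩ := eventually_atTop.mp hev
    refine squeeze_zero_norm' (a := fun M => ‖Bᵀ‖ * ‖P‖ * ‖B‖ * r ^ d * (r * r) ^ M) ?_ ?_
    · refine eventually_atTop.mpr ⟨i₀, fun M hM => ?_⟩
      have h1 : ‖Ac ^ M‖ ≤ r ^ M := hi₀ M hM
      have h2 : ‖Ac ^ (M + d)‖ ≤ r ^ (M + d) := hi₀ (M + d) (le_trans hM (Nat.le_add_right _ _))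
      have h3 : ‖(Acᵀ) ^ M‖ ≤ r ^ M := by
        rw [← Matrix.transpose_pow, Matrix.frobenius_norm_transpose]; exact h1
      calc ‖Bᵀ * (Acᵀ) ^ M * P * Ac ^ (M + d) * B‖
          ≤ ‖Bᵀ‖ * ‖(Acᵀ) ^ M‖ * ‖P‖ * ‖Ac ^ (M + d)‖ * ‖B‖ := by
            refine le_trans (Matrix.frobenius_norm_mul _ _) ?_
            gcongr
            refine le_trans (Matrix.frobenius_norm_mul _ _) ?_
            gcongr
            refine le_trans (Matrix.frobenius_norm_mul _ _) ?_
            gcongr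
            exact Matrix.frobenius_norm_mul _ _
        _ ≤ ‖Bᵀ‖ * r ^ M * ‖P‖ * r ^ (M + d) * ‖B‖ := by
            gcongr ‖Bᵀ‖ * ?_ * ‖P‖ * ?_ * ‖B‖ <;> first | exact h3 | exact h2
        _ = (‖Bᵀ‖ * ‖P‖ * ‖B‖ * r ^ d) * (r * r) ^ M := by
            rw [pow_add, mul_pow]; ring
    · have : Tendsto (fun M : ℕ => (r * r) ^ M) atTop (nhds 0) :=
        tendsto_pow_atTop_nhds_zero_of_lt_one (by positivity) hq1
      simpa using this.const_mul (‖Bᵀ‖ * ‖P‖ * ‖B‖ * r ^ d)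
  have := (tendsto_const_nhds (x := Bᵀ * P * Ac ^ d * B)).sub htail
  rw [sub_zero] at this
  exact this

end Aux

/-- If `A - B*K` is Schur-stable and `P` solves the Lyapunov equation, then for all
`N ≥ 1` and `0 ≤ k ≤ j ≤ N-1` the off-diagonal Hessian block plus its terminal
correction collapses to an infinite sum depending only on `j - k`. -/
theorem stmt8 {n m : ℕ} (hn : 0 < n) (hm : 0 < m)
    (A : Matrix (Fin n) (Fin n) ℝ) (B : Matrix (Fin n) (Fin m) ℝ)
    (K : Matrix (Fin m) (Fin n) ℝ)
    (Q : Matrix (Fin n) (Fin n) ℝ) (R : Matrix (Fin m) (Fin m) ℝ)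
    (hQ : Q.PosSemidef) (hR : R.PosDef)
    (hstab : SchurStable (A - B * K))
    (P : Matrix (Fin n) (Fin n) ℝ)
    (hlyap : (A - B * K)ᵀ * P * (A - B * K) + (Q + Kᵀ * R * K) = P) :
    ∀ N : ℕ, 1 ≤ N → ∀ j k : ℕ, k ≤ j → j ≤ N - 1 →
      (∑ i ∈ Finset.range (N - j),
          Bᵀ * ((A - B * K)ᵀ) ^ i * (Q + Kᵀ * R * K) * (A - B * K) ^ (i + j - k) * B)
        + Bᵀ * ((A - B * K)ᵀ) ^ (N - j) * P * (A - B * K) ^ (N - k) * B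
      = ∑' i : ℕ,
          Bᵀ * ((A - B * K)ᵀ) ^ i * (Q + Kᵀ * R * K) * (A - B * K) ^ (i + j - k) * B := by
  intro N hN j k hkj hjN
  set Ac := A - B * K
  set Qc := Q + Kᵀ * R * K
  have hd : ∀ i : ℕ, i + j - k = i + (j - k) := fun i => by omega
  have hNk : N - k = (N - j) + (j - k) := by omega
  simp only [hd]
  rw [hNk, lyap_partial_sum Ac B Qc P hlyap (j - k) (N - j), sub_add_cancel,
    (lyap_hasSum hn Ac hstab B Qc P hlyap (j - k)).tsum_eq]
end

section
/- Suppose every eigenvalue μ ∈ ℂ of A satisfies |μ| < 1, take K = 0 (so A_c = A and Q_c = Q), and suppose the terminal weight P ∈ ℝ^{n×n} satisfies the discrete Lyapunov equation Aᵀ P A + Q = P. Then for every horizon N ≥ 1 the condensed Hessian H_N is block Toeplitz: for all 0 ≤ j, k ≤ N−1 with j ≥ k, (H_N)_{j,k} = ∑_{i=0}^∞ Bᵀ(Aᵀ)^i Q A^{i+j−k} B + (if j = k then R else 0), so the blocks depend only on j − k. -/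
open Matrix Filter
open scoped Kronecker
open scoped NNReal ENNReal Topology

lemma aux_spectrum_transpose {n : ℕ} (M : Matrix (Fin n) (Fin n) ℂ) :
    spectrum ℂ Mᵀ = spectrum ℂ M := by
  ext μ
  simp only [spectrum.mem_iff, Algebra.algebraMap_eq_smul_one]
  constructor <;> intro h <;> intro hu <;> apply h
  · rw [Matrix.isUnit_iff_isUnit_det] at hu ⊢
    rwa [show μ • (1 : Matrix (Fin n) (Fin n) ℂ) - Mᵀ
        = (μ • (1 : Matrix (Fin n) (Fin n) ℂ) - M)ᵀ by
      rw [Matrix.transpose_sub, Matrix.transpose_smul, Matrix.transpose_one],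
      Matrix.det_transpose]
  · rw [Matrix.isUnit_iff_isUnit_det] at hu ⊢
    rwa [show μ • (1 : Matrix (Fin n) (Fin n) ℂ) - M
        = (μ • (1 : Matrix (Fin n) (Fin n) ℂ) - Mᵀ)ᵀ by
      rw [Matrix.transpose_sub, Matrix.transpose_smul, Matrix.transpose_one,
        Matrix.transpose_transpose],
      Matrix.det_transpose]

lemma aux_tele {n m : ℕ} (A : Matrix (Fin n) (Fin n) ℝ) (B : Matrix (Fin n) (Fin m) ℝ)
    (Q P : Matrix (Fin n) (Fin n) ℝ) (hlyap : Aᵀ * P * A + Q = P) (d : ℕ) :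
    ∀ K : ℕ, (∑ i ∈ Finset.range K, Bᵀ * (Aᵀ) ^ i * Q * A ^ (i + d) * B)
      = Bᵀ * P * A ^ d * B - Bᵀ * (Aᵀ) ^ K * P * A ^ (K + d) * B := by
  have hQ' : Q = P - Aᵀ * P * A := (eq_sub_of_add_eq' hlyap)
  intro K
  induction K with
  | zero => simp
  | succ K ih =>
    rw [Finset.sum_range_succ, ih, hQ']
    have e2 : Bᵀ * (Aᵀ) ^ K * (Aᵀ * P * A) * A ^ (K + d) * B
        = Bᵀ * (Aᵀ) ^ (K + 1) * P * A ^ (K + 1 + d) * B := by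
      rw [pow_succ (Aᵀ) K, show K + 1 + d = (K + d) + 1 by omega, pow_succ' A (K + d)]
      simp only [Matrix.mul_assoc]
    have e1 : Bᵀ * (Aᵀ) ^ K * (P - Aᵀ * P * A) * A ^ (K + d) * B
        = Bᵀ * (Aᵀ) ^ K * P * A ^ (K + d) * B
          - Bᵀ * (Aᵀ) ^ (K + 1) * P * A ^ (K + 1 + d) * B := by
      rw [Matrix.mul_sub, Matrix.sub_mul, Matrix.sub_mul, e2]
    rw [e1]
    exact sub_add_sub_cancel _ _ _

section NormStuff
variable {n m : ℕ}
attribute [local instance] Matrix.linftyOpNormedAddCommGroup Matrix.linftyOpNormedRing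
  Matrix.linftyOpNormedAlgebra Matrix.linftyOpNormedSpace

noncomputable local instance : CompleteSpace (Matrix (Fin n) (Fin n) ℂ) :=
  FiniteDimensional.complete ℂ _

lemma aux_nnnorm_map {k l : ℕ} (M : Matrix (Fin k) (Fin l) ℝ) :
    ‖M.map Complex.ofReal‖₊ = ‖M‖₊ := by
  simp [Matrix.linfty_opNNNorm_def, Matrix.map_apply]

lemma aux_geomC (M : Matrix (Fin n) (Fin n) ℂ) (h : ∀ μ ∈ spectrum ℂ M, ‖μ‖ < 1) :
    ∃ r : ℝ≥0, r < 1 ∧ ∀ᶠ i : ℕ in atTop, ‖M ^ i‖₊ ≤ r ^ i := by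
  have hρ : spectralRadius ℂ M < 1 := by
    rcases (spectrum ℂ M).eq_empty_or_nonempty with he | hne
    · simp [spectralRadius, he]
    · exact_mod_cast spectrum.spectralRadius_lt_of_forall_lt_of_nonempty hne
        (r := 1) (fun k hk => by simpa [← NNReal.coe_lt_coe, coe_nnnorm] using h k hk)
  obtain ⟨r, hr1, hr2⟩ := ENNReal.lt_iff_exists_nnreal_btwn.mp hρ
  refine ⟨r, by exact_mod_cast hr2, ?_⟩
  have hg := spectrum.pow_nnnorm_pow_one_div_tendsto_nhds_spectralRadius M
  have hev : ∀ᶠ i : ℕ in atTop, (‖M ^ i‖₊ : ℝ≥0∞) ^ (1 / (i:ℝ)) < r :=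
    hg.eventually_lt_const hr1
  filter_upwards [hev, eventually_ge_atTop 1] with i hi hi1
  have hipos : (0:ℝ) < i := by exact_mod_cast hi1
  have key : (‖M ^ i‖₊ : ℝ≥0∞) ≤ ((r ^ i : ℝ≥0) : ℝ≥0∞) := by
    calc (‖M ^ i‖₊ : ℝ≥0∞)
        = ((‖M ^ i‖₊ : ℝ≥0∞) ^ (1 / (i:ℝ))) ^ (i:ℝ) := by
          rw [← ENNReal.rpow_mul, one_div, inv_mul_cancel₀ (ne_of_gt hipos),
            ENNReal.rpow_one]
      _ ≤ (r : ℝ≥0∞) ^ (i:ℝ) := ENNReal.rpow_le_rpow hi.le hipos.le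
      _ = ((r ^ i : ℝ≥0) : ℝ≥0∞) := by rw [ENNReal.rpow_natCast, ENNReal.coe_pow]
  exact_mod_cast key

lemma aux_geomR (A : Matrix (Fin n) (Fin n) ℝ)
    (h : ∀ μ ∈ spectrum ℂ (A.map Complex.ofReal), ‖μ‖ < 1) :
    ∃ r : ℝ≥0, r < 1 ∧ ∀ᶠ i : ℕ in atTop, ‖A ^ i‖₊ ≤ r ^ i := by
  obtain ⟨r, hr, hev⟩ := aux_geomC (A.map Complex.ofReal) h
  refine ⟨r, hr, ?_⟩
  have hpow : ∀ i : ℕ, (A.map Complex.ofReal) ^ i = (A ^ i).map Complex.ofReal := by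
    intro i
    have : A.map Complex.ofReal = Complex.ofRealHom.mapMatrix A := rfl
    rw [this, ← map_pow, RingHom.mapMatrix_apply]; rfl
  filter_upwards [hev] with i hi
  rwa [hpow i, aux_nnnorm_map] at hi
end NormStuff

section KeyLemma
variable {n m : ℕ}
attribute [local instance] Matrix.linftyOpNormedAddCommGroup Matrix.linftyOpNormedRing
  Matrix.linftyOpNormedAlgebra Matrix.linftyOpNormedSpace

set_option maxHeartbeats 2000000 in
lemma aux_key (A : Matrix (Fin n) (Fin n) ℝ) (B : Matrix (Fin n) (Fin m) ℝ)
    (Q P : Matrix (Fin n) (Fin n) ℝ)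
    (hstab : ∀ μ ∈ spectrum ℂ (A.map Complex.ofReal), ‖μ‖ < 1)
    (hlyap : Aᵀ * P * A + Q = P) (d M : ℕ) :
    (∑ i ∈ Finset.range M, Bᵀ * (Aᵀ) ^ i * Q * A ^ (i + d) * B)
      + Bᵀ * (Aᵀ) ^ M * P * A ^ (M + d) * B
      = ∑' i : ℕ, Bᵀ * (Aᵀ) ^ i * Q * A ^ (i + d) * B := by
  have hstabT : ∀ μ ∈ spectrum ℂ ((Aᵀ).map Complex.ofReal), ‖μ‖ < 1 := by
    intro μ hμ
    apply hstab
    rwa [Matrix.transpose_map, aux_spectrum_transpose] at hμ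
  obtain ⟨r, hr, hevA⟩ := aux_geomR A hstab
  obtain ⟨s, hs, hevT⟩ := aux_geomR Aᵀ hstabT
  have hmul5 : ∀ (X Z Y : Matrix (Fin n) (Fin n) ℝ),
      ‖Bᵀ * X * Z * Y * B‖₊ ≤ ‖Bᵀ‖₊ * ‖X‖₊ * ‖Z‖₊ * ‖Y‖₊ * ‖B‖₊ := by
    intro X Z Y
    calc ‖Bᵀ * X * Z * Y * B‖₊ ≤ ‖Bᵀ * X * Z * Y‖₊ * ‖B‖₊ :=
          Matrix.linfty_opNNNorm_mul _ _
      _ ≤ (‖Bᵀ * X * Z‖₊ * ‖Y‖₊) * ‖B‖₊ :=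
          mul_le_mul_left (Matrix.linfty_opNNNorm_mul _ _) _
      _ ≤ ((‖Bᵀ * X‖₊ * ‖Z‖₊) * ‖Y‖₊) * ‖B‖₊ :=
          mul_le_mul_left (mul_le_mul_left (Matrix.linfty_opNNNorm_mul _ _) _) _
      _ ≤ (((‖Bᵀ‖₊ * ‖X‖₊) * ‖Z‖₊) * ‖Y‖₊) * ‖B‖₊ :=
          mul_le_mul_left (mul_le_mul_left
            (mul_le_mul_left (Matrix.linfty_opNNNorm_mul _ _) _) _) _
  have hevA1 : ∀ᶠ i : ℕ in atTop, ‖A ^ (i + d)‖₊ ≤ 1 := by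
    obtain ⟨ia, hia⟩ := eventually_atTop.mp hevA
    refine eventually_atTop.mpr ⟨ia, fun i hi => ?_⟩
    exact (hia (i + d) (le_trans hi (Nat.le_add_right _ _))).trans (pow_le_one' hr.le _)
  have hsummable : Summable (fun i : ℕ => Bᵀ * (Aᵀ) ^ i * Q * A ^ (i + d) * B) := by
    apply Summable.of_norm_bounded_eventually_nat
      (g := fun i => ((‖Bᵀ‖₊ * ‖Q‖₊ * ‖B‖₊ : ℝ≥0) : ℝ) * (s : ℝ) ^ i)
    · exact (summable_geometric_of_lt_one s.coe_nonneg (by exact_mod_cast hs)).mul_left _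
    · filter_upwards [hevT, hevA1] with i h1 h2
      have hb : ‖Bᵀ * (Aᵀ) ^ i * Q * A ^ (i + d) * B‖₊
          ≤ (‖Bᵀ‖₊ * ‖Q‖₊ * ‖B‖₊) * s ^ i := by
        refine (hmul5 _ _ _).trans ?_
        calc ‖Bᵀ‖₊ * ‖(Aᵀ) ^ i‖₊ * ‖Q‖₊ * ‖A ^ (i + d)‖₊ * ‖B‖₊
            ≤ ‖Bᵀ‖₊ * s ^ i * ‖Q‖₊ * 1 * ‖B‖₊ := by gcongr <;> assumption
          _ = (‖Bᵀ‖₊ * ‖Q‖₊ * ‖B‖₊) * s ^ i := by ring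
      exact_mod_cast hb
  have htail : Tendsto (fun K : ℕ => Bᵀ * (Aᵀ) ^ K * P * A ^ (K + d) * B)
      atTop (𝓝 0) := by
    have hgt : Tendsto (fun K : ℕ => ((‖Bᵀ‖₊ * ‖P‖₊ * ‖B‖₊ : ℝ≥0) : ℝ) * (s : ℝ) ^ K)
        atTop (𝓝 0) := by
      have := (tendsto_pow_atTop_nhds_zero_of_lt_one s.coe_nonneg
        (by exact_mod_cast hs)).const_mul ((‖Bᵀ‖₊ * ‖P‖₊ * ‖B‖₊ : ℝ≥0) : ℝ)
      simpa using this
    refine squeeze_zero_norm' ?_ hgt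
    filter_upwards [hevT, hevA1] with K h1 h2
    have hb : ‖Bᵀ * (Aᵀ) ^ K * P * A ^ (K + d) * B‖₊
        ≤ (‖Bᵀ‖₊ * ‖P‖₊ * ‖B‖₊) * s ^ K := by
      refine (hmul5 _ _ _).trans ?_
      calc ‖Bᵀ‖₊ * ‖(Aᵀ) ^ K‖₊ * ‖P‖₊ * ‖A ^ (K + d)‖₊ * ‖B‖₊
          ≤ ‖Bᵀ‖₊ * s ^ K * ‖P‖₊ * 1 * ‖B‖₊ := by gcongr <;> assumption
        _ = (‖Bᵀ‖₊ * ‖P‖₊ * ‖B‖₊) * s ^ K := by ring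
    exact_mod_cast hb
  have hps : Tendsto (fun K : ℕ => ∑ i ∈ Finset.range K, Bᵀ * (Aᵀ) ^ i * Q * A ^ (i + d) * B)
      atTop (𝓝 (Bᵀ * P * A ^ d * B)) := by
    have h0 := tendsto_const_nhds (x := Bᵀ * P * A ^ d * B) (f := atTop (α := ℕ))
    have h1 := h0.sub htail
    rw [sub_zero] at h1
    exact h1.congr (fun K => (aux_tele A B Q P hlyap d K).symm)
  have hts : (∑' i : ℕ, Bᵀ * (Aᵀ) ^ i * Q * A ^ (i + d) * B) = Bᵀ * P * A ^ d * B :=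
    tendsto_nhds_unique hsummable.hasSum.tendsto_sum_nat hps
  rw [hts, aux_tele A B Q P hlyap d M, sub_add_cancel]

end KeyLemma

/-- If `A` is Schur-stable, `K = 0`, and the terminal weight `P` solves the discrete
Lyapunov equation `Aᵀ P A + Q = P`, then the condensed Hessian is block Toeplitz:
each `(j,k)` block with `j ≥ k` equals `∑ᵢ Bᵀ(Aᵀ)ⁱ Q A^{i+j-k} B + (if j = k then R else 0)`. -/
theorem stmt10 {n m : ℕ} (hn : 0 < n) (hm : 0 < m)
    (A : Matrix (Fin n) (Fin n) ℝ) (B : Matrix (Fin n) (Fin m) ℝ)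
    (Q : Matrix (Fin n) (Fin n) ℝ) (R : Matrix (Fin m) (Fin m) ℝ)
    (hQ : Q.PosSemidef) (hR : R.PosDef)
    (hstab : SchurStable A)
    (P : Matrix (Fin n) (Fin n) ℝ) (hP : P.IsSymm)
    (hlyap : Aᵀ * P * A + Q = P) :
    ∀ N : ℕ, 1 ≤ N → ∀ j k : Fin N, (k : ℕ) ≤ (j : ℕ) →
      (Matrix.of fun a b : Fin m => Hmat A B Q P R N (j, a) (k, b))
        = (∑' i : ℕ, Bᵀ * (Aᵀ) ^ i * Q * A ^ (i + (j : ℕ) - (k : ℕ)) * B)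
          + (if (j : ℕ) = (k : ℕ) then R else 0) := by
  intro N hN j k hjk
  have hM : (Matrix.of fun a b : Fin m => Hmat A B Q P R N (j, a) (k, b))
      = Hge A B Q P R N j k := by
    ext a b
    simp only [Hmat, Matrix.of_apply]
    rw [if_pos hjk]
  rw [hM]
  unfold Hge
  have hjN : (j : ℕ) < N := j.isLt
  have h1 : ∀ i : ℕ, i + (j : ℕ) - (k : ℕ) = i + ((j : ℕ) - (k : ℕ)) := fun i => by omega
  have h2 : (N : ℕ) - (k : ℕ) = (N - (j : ℕ)) + ((j : ℕ) - (k : ℕ)) := by omega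
  simp only [h1, h2]
  rw [aux_key A B Q P hstab hlyap ((j : ℕ) - (k : ℕ)) (N - (j : ℕ))]
end

section
/- Suppose A_c := A − BK is Schur-stable and the terminal weight P ∈ ℝ^{n×n} satisfies the Lyapunov equation A_cᵀ P A_c + Q_c = P. Then the largest eigenvalue λ_max(H_N) of the symmetric matrix H_N is nondecreasing in the horizon N, and the smallest eigenvalue λ_min(H_N) is nonincreasing in N. -/
open Matrix Filter
open scoped Kronecker

section SpecHelpers

variable {o : Type*} [Fintype o] [DecidableEq o]

lemma myExists_eigvec (A : Matrix o o ℝ) {μ : ℝ} (h : μ ∈ spectrum ℝ A) :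
    ∃ v : o → ℝ, v ≠ 0 ∧ A *ᵥ v = μ • v := by
  rw [← AlgEquiv.spectrum_eq (Matrix.toLinAlgEquiv' (R := ℝ) (n := o)),
    ← Module.End.hasEigenvalue_iff_mem_spectrum] at h
  obtain ⟨v, hv⟩ := h.exists_hasEigenvector
  refine ⟨v, hv.right, ?_⟩
  have h2 := hv.apply_eq_smul
  rwa [show (Matrix.toLinAlgEquiv' A : Module.End ℝ (o → ℝ)) v = A *ᵥ v from
    Matrix.toLinAlgEquiv'_apply A v] at h2

lemma mySpec_subset_range {A : Matrix o o ℝ} (hA : A.IsHermitian) :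
    spectrum ℝ A ⊆ Set.range hA.eigenvalues := by
  intro μ hμ
  obtain ⟨v, hv0, hveq⟩ := myExists_eigvec A hμ
  set U := (hA.eigenvectorUnitary : Matrix o o ℝ) with hU
  have hU1 : U * star U = 1 := by
    have := Unitary.coe_mul_star_self hA.eigenvectorUnitary
    rwa [Unitary.coe_star] at this
  have hU2 : star U * U = 1 := Unitary.coe_star_mul_self hA.eigenvectorUnitary
  set w := (star U) *ᵥ v with hw
  have hw0 : w ≠ 0 := by
    intro hcon
    apply hv0
    have : U *ᵥ ((star U) *ᵥ v) = U *ᵥ (0 : o → ℝ) := by rw [← hw, hcon]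
    rwa [Matrix.mulVec_mulVec, hU1, Matrix.one_mulVec, Matrix.mulVec_zero] at this
  have hAeq : A = U * diagonal hA.eigenvalues * star U := by
    have := hA.spectral_theorem
    rwa [show (RCLike.ofReal ∘ hA.eigenvalues : o → ℝ) = hA.eigenvalues by
      funext i; simp [RCLike.ofReal_real_eq_id]] at this
  have hcomm : diagonal hA.eigenvalues * star U = star U * A := by
    conv_rhs => rw [hAeq]
    simp only [← Matrix.mul_assoc]
    rw [hU2, Matrix.one_mul]
  have hdiag : diagonal hA.eigenvalues *ᵥ w = μ • w := by
    calc diagonal hA.eigenvalues *ᵥ w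
        = (diagonal hA.eigenvalues * star U) *ᵥ v := by rw [hw, Matrix.mulVec_mulVec]
      _ = (star U * A) *ᵥ v := by rw [hcomm]
      _ = star U *ᵥ (A *ᵥ v) := by rw [Matrix.mulVec_mulVec]
      _ = μ • w := by rw [hveq, Matrix.mulVec_smul, hw]
  obtain ⟨i, hi⟩ := Function.ne_iff.mp hw0
  refine ⟨i, ?_⟩
  have h1 := congrFun hdiag i
  rw [Matrix.mulVec_diagonal] at h1
  have h2 : (μ • w) i = μ * w i := rfl
  rw [h2] at h1
  exact mul_right_cancel₀ (by simpa using hi) h1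

lemma myPsd_smul_sub {A : Matrix o o ℝ} (hA : A.IsHermitian) {c : ℝ}
    (hc : ∀ i, hA.eigenvalues i ≤ c) : (c • (1 : Matrix o o ℝ) - A).PosSemidef := by
  set U := (hA.eigenvectorUnitary : Matrix o o ℝ) with hU
  have hU1 : U * star U = 1 := by
    have := Unitary.coe_mul_star_self hA.eigenvectorUnitary
    rwa [Unitary.coe_star] at this
  have hAeq : A = U * diagonal hA.eigenvalues * star U := by
    have := hA.spectral_theorem
    rwa [show (RCLike.ofReal ∘ hA.eigenvalues : o → ℝ) = hA.eigenvalues by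
      funext i; simp [RCLike.ofReal_real_eq_id]] at this
  have hone : c • (1 : Matrix o o ℝ) = U * diagonal (fun _ => c) * star U := by
    rw [← Matrix.smul_one_eq_diagonal, Matrix.mul_smul, Matrix.mul_one, Matrix.smul_mul, hU1]
  have key : c • (1 : Matrix o o ℝ) - A
      = U * diagonal (fun i => c - hA.eigenvalues i) * star U := by
    rw [hone]
    conv_lhs => rw [hAeq]
    rw [← Matrix.sub_mul, ← Matrix.mul_sub, Matrix.diagonal_sub]
  rw [key, Matrix.star_eq_conjTranspose]
  exact (Matrix.posSemidef_diagonal_iff.mpr fun i => sub_nonneg.mpr (hc i)).mul_mul_conjTranspose_same _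

lemma myPsd_sub_smul {A : Matrix o o ℝ} (hA : A.IsHermitian) {c : ℝ}
    (hc : ∀ i, c ≤ hA.eigenvalues i) : (A - c • (1 : Matrix o o ℝ)).PosSemidef := by
  set U := (hA.eigenvectorUnitary : Matrix o o ℝ) with hU
  have hU1 : U * star U = 1 := by
    have := Unitary.coe_mul_star_self hA.eigenvectorUnitary
    rwa [Unitary.coe_star] at this
  have hAeq : A = U * diagonal hA.eigenvalues * star U := by
    have := hA.spectral_theorem
    rwa [show (RCLike.ofReal ∘ hA.eigenvalues : o → ℝ) = hA.eigenvalues by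
      funext i; simp [RCLike.ofReal_real_eq_id]] at this
  have hone : c • (1 : Matrix o o ℝ) = U * diagonal (fun _ => c) * star U := by
    rw [← Matrix.smul_one_eq_diagonal, Matrix.mul_smul, Matrix.mul_one, Matrix.smul_mul, hU1]
  have key : A - c • (1 : Matrix o o ℝ)
      = U * diagonal (fun i => hA.eigenvalues i - c) * star U := by
    rw [hone]
    conv_lhs => rw [hAeq]
    rw [← Matrix.sub_mul, ← Matrix.mul_sub, Matrix.diagonal_sub]
  rw [key, Matrix.star_eq_conjTranspose]
  exact (Matrix.posSemidef_diagonal_iff.mpr fun i => sub_nonneg.mpr (hc i)).mul_mul_conjTranspose_same _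

/-- Rayleigh-type bound and monotonicity of extreme spectrum under principal submatrices. -/
lemma mySpec_bounds {l : Type*} [Fintype l] [DecidableEq l] [Nonempty l]
    (T : Matrix o o ℝ) (hT : T.IsHermitian) (ι : l → o) (hι : Function.Injective ι) :
    sSup (spectrum ℝ (T.submatrix ι ι)) ≤ sSup (spectrum ℝ T) ∧
      sInf (spectrum ℝ T) ≤ sInf (spectrum ℝ (T.submatrix ι ι)) := by
  classical
  have hS : (T.submatrix ι ι).IsHermitian := hT.submatrix ι
  have hneS : (spectrum ℝ (T.submatrix ι ι)).Nonempty :=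
    ⟨_, hS.eigenvalues_mem_spectrum_real (Classical.arbitrary l)⟩
  have hno : Nonempty o := ⟨ι (Classical.arbitrary l)⟩
  have hsub := mySpec_subset_range hT
  have hbddA : BddAbove (spectrum ℝ T) :=
    (Set.finite_range hT.eigenvalues).bddAbove.mono hsub
  have hbddB : BddBelow (spectrum ℝ T) :=
    (Set.finite_range hT.eigenvalues).bddBelow.mono hsub
  have hneT : (spectrum ℝ T).Nonempty :=
    ⟨_, hT.eigenvalues_mem_spectrum_real (Classical.arbitrary o)⟩
  set cM := sSup (spectrum ℝ T) with hcM
  set cm := sInf (spectrum ℝ T) with hcm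
  have hup : ∀ i, hT.eigenvalues i ≤ cM :=
    fun i => le_csSup hbddA (hT.eigenvalues_mem_spectrum_real i)
  have hlo : ∀ i, cm ≤ hT.eigenvalues i :=
    fun i => csInf_le hbddB (hT.eigenvalues_mem_spectrum_real i)
  have hpsd1 := (myPsd_smul_sub hT hup).submatrix ι
  have hpsd2 := (myPsd_sub_smul hT hlo).submatrix ι
  have hsub1 : (cM • (1 : Matrix o o ℝ) - T).submatrix ι ι
      = cM • (1 : Matrix l l ℝ) - T.submatrix ι ι := by
    ext i j
    simp [Matrix.submatrix_apply, Matrix.sub_apply, Matrix.smul_apply,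
      Matrix.one_apply, hι.eq_iff]
  have hsub2 : (T - cm • (1 : Matrix o o ℝ)).submatrix ι ι
      = T.submatrix ι ι - cm • (1 : Matrix l l ℝ) := by
    ext i j
    simp [Matrix.submatrix_apply, Matrix.sub_apply, Matrix.smul_apply,
      Matrix.one_apply, hι.eq_iff]
  rw [hsub1] at hpsd1
  rw [hsub2] at hpsd2
  have hbound : ∀ μ ∈ spectrum ℝ (T.submatrix ι ι), cm ≤ μ ∧ μ ≤ cM := by
    intro μ hμ
    obtain ⟨v, hv0, hveq⟩ := myExists_eigvec _ hμ
    have hvpos : 0 < v ⬝ᵥ v :=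
      lt_of_le_of_ne (Finset.sum_nonneg fun i _ => mul_self_nonneg _)
        (fun hcon => hv0 (dotProduct_self_eq_zero.mp hcon.symm))
    constructor
    · have h0 := hpsd2.dotProduct_mulVec_nonneg v
      have : star v ⬝ᵥ ((T.submatrix ι ι - cm • 1) *ᵥ v) = (μ - cm) * (v ⬝ᵥ v) := by
        rw [Matrix.sub_mulVec, hveq, Matrix.smul_mulVec, Matrix.one_mulVec]
        simp [dotProduct_sub, dotProduct_smul, sub_mul, star_trivial]
      rw [this] at h0
      nlinarith [h0, hvpos]
    · have h0 := hpsd1.dotProduct_mulVec_nonneg v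
      have : star v ⬝ᵥ ((cM • 1 - T.submatrix ι ι) *ᵥ v) = (cM - μ) * (v ⬝ᵥ v) := by
        rw [Matrix.sub_mulVec, hveq, Matrix.smul_mulVec, Matrix.one_mulVec]
        simp [dotProduct_sub, dotProduct_smul, sub_mul, star_trivial]
      rw [this] at h0
      nlinarith [h0, hvpos]
  constructor
  · exact csSup_le hneS fun μ hμ => (hbound μ hμ).2
  · exact le_csInf hneS fun μ hμ => (hbound μ hμ).1

end SpecHelpers

section HgeHelpers

variable {n m : ℕ} (Ac : Matrix (Fin n) (Fin n) ℝ) (B : Matrix (Fin n) (Fin m) ℝ)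
  (Qc P : Matrix (Fin n) (Fin n) ℝ) (R : Matrix (Fin m) (Fin m) ℝ)

lemma key_term (hlyap : Acᵀ * P * Ac + Qc = P) (a b : ℕ) :
    Bᵀ * (Acᵀ) ^ a * Qc * Ac ^ b * B + Bᵀ * (Acᵀ) ^ (a + 1) * P * Ac ^ (b + 1) * B
      = Bᵀ * (Acᵀ) ^ a * P * Ac ^ b * B := by
  conv_rhs => rw [← hlyap]
  rw [pow_succ, pow_succ']
  simp only [Matrix.mul_add, Matrix.add_mul, Matrix.mul_assoc]
  exact add_comm _ _

lemma Hge_succ (hlyap : Acᵀ * P * Ac + Qc = P) {N j k : ℕ} (hk : k ≤ j) (hj : j ≤ N) :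
    Hge Ac B Qc P R (N + 1) j k = Hge Ac B Qc P R N j k := by
  unfold Hge
  have h1 : N + 1 - j = (N - j) + 1 := by omega
  have h2 : (N - j) + j - k = N - k := by omega
  have h4 : N + 1 - k = (N - k) + 1 := by omega
  rw [h1, h4, Finset.sum_range_succ, h2]
  have := key_term Ac B Qc P hlyap (N - j) (N - k)
  rw [add_assoc (∑ i ∈ Finset.range (N - j), Bᵀ * (Acᵀ) ^ i * Qc * Ac ^ (i + j - k) * B), this]

lemma Hge_eq (hlyap : Acᵀ * P * Ac + Qc = P) {N₁ j k : ℕ} (hk : k ≤ j) (hj : j ≤ N₁) :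
    ∀ N₂, N₁ ≤ N₂ → Hge Ac B Qc P R N₂ j k = Hge Ac B Qc P R N₁ j k := by
  intro N₂
  induction N₂ with
  | zero =>
    intro h12
    have hz : N₁ = 0 := by omega
    rw [hz]
  | succ M ih =>
    intro h12
    by_cases hM : N₁ ≤ M
    · rw [Hge_succ Ac B Qc P R hlyap hk (le_trans hj hM), ih hM]
    · have hz : N₁ = M + 1 := by omega
      rw [hz]

lemma Hmat_submatrix (hlyap : Acᵀ * P * Ac + Qc = P) {N₁ N₂ : ℕ} (h12 : N₁ ≤ N₂) :
    Hmat Ac B Qc P R N₁ = (Hmat Ac B Qc P R N₂).submatrix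
      (fun p => (Fin.castLE h12 p.1, p.2)) (fun p => (Fin.castLE h12 p.1, p.2)) := by
  ext p q
  simp only [Hmat, Matrix.submatrix_apply, Matrix.of_apply, Fin.coe_castLE]
  split_ifs with h
  · rw [Hge_eq Ac B Qc P R hlyap h p.1.isLt.le N₂ h12]
  · rw [Hge_eq Ac B Qc P R hlyap (le_of_not_ge h) q.1.isLt.le N₂ h12]

lemma Hmat_isHermitian (hQc : Qcᵀ = Qc) (hP : Pᵀ = P) (hR : Rᵀ = R) (N : ℕ) :
    (Hmat Ac B Qc P R N).IsHermitian := by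
  have hdiag : ∀ j, (Hge Ac B Qc P R N j j)ᵀ = Hge Ac B Qc P R N j j := by
    intro j
    unfold Hge
    simp only [Nat.add_sub_cancel, Matrix.transpose_add, Matrix.transpose_sum,
      Matrix.transpose_mul, Matrix.transpose_transpose, Matrix.transpose_pow, hQc, hP,
      eq_self_iff_true, if_true, hR, Matrix.mul_assoc]
  rw [Matrix.IsHermitian, Matrix.conjTranspose_eq_transpose_of_trivial]
  apply Matrix.ext
  rintro ⟨p1, p2⟩ ⟨q1, q2⟩
  simp only [Matrix.transpose_apply, Hmat, Matrix.of_apply]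
  rcases lt_trichotomy (p1 : ℕ) (q1 : ℕ) with h | h | h
  · rw [if_pos h.le, if_neg (by omega)]
  · have : p1 = q1 := Fin.ext h
    subst this
    rw [if_pos le_rfl, if_pos le_rfl]
    exact congrFun (congrFun (hdiag ↑p1) p2) q2
  · rw [if_neg (by omega), if_pos h.le]

end HgeHelpers

/-- If `A - B*K` is Schur-stable and the terminal weight solves the Lyapunov equation,
then the largest eigenvalue of `H_N` is nondecreasing in the horizon `N`, and the
smallest eigenvalue is nonincreasing in `N`. -/
theorem stmt12 {n m : ℕ} (hn : 0 < n) (hm : 0 < m)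
    (A : Matrix (Fin n) (Fin n) ℝ) (B : Matrix (Fin n) (Fin m) ℝ)
    (K : Matrix (Fin m) (Fin n) ℝ)
    (Q : Matrix (Fin n) (Fin n) ℝ) (R : Matrix (Fin m) (Fin m) ℝ)
    (hQ : Q.PosSemidef) (hR : R.PosDef)
    (hstab : SchurStable (A - B * K))
    (P : Matrix (Fin n) (Fin n) ℝ) (hP : P.IsSymm)
    (hlyap : (A - B * K)ᵀ * P * (A - B * K) + (Q + Kᵀ * R * K) = P) :
    ∀ N₁ N₂ : ℕ, 1 ≤ N₁ → N₁ ≤ N₂ →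
      sSup (spectrum ℝ (Hmat (A - B * K) B (Q + Kᵀ * R * K) P R N₁))
        ≤ sSup (spectrum ℝ (Hmat (A - B * K) B (Q + Kᵀ * R * K) P R N₂)) ∧
      sInf (spectrum ℝ (Hmat (A - B * K) B (Q + Kᵀ * R * K) P R N₂))
        ≤ sInf (spectrum ℝ (Hmat (A - B * K) B (Q + Kᵀ * R * K) P R N₁)) := by
  intro N₁ N₂ hN1 h12
  set Ac := A - B * K with hAcdef
  set Qc := Q + Kᵀ * R * K with hQcdef
  have hQt : Qᵀ = Q := by
    rw [← Matrix.conjTranspose_eq_transpose_of_trivial]; exact hQ.1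
  have hRt : Rᵀ = R := by
    rw [← Matrix.conjTranspose_eq_transpose_of_trivial]; exact hR.1
  have hQct : Qcᵀ = Qc := by
    simp [hQcdef, Matrix.transpose_add, Matrix.transpose_mul,
      Matrix.transpose_transpose, hQt, hRt, Matrix.mul_assoc]
  have hPt : Pᵀ = P := hP
  have hherm := Hmat_isHermitian Ac B Qc P R hQct hPt hRt N₂
  haveI : Nonempty (Fin N₁ × Fin m) := ⟨(⟨0, hN1⟩ : Fin N₁), ⟨0, hm⟩⟩
  have hι : Function.Injective
      (fun p : Fin N₁ × Fin m => ((Fin.castLE h12 p.1, p.2) : Fin N₂ × Fin m)) := by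
    intro a b hab
    simp only [Prod.mk.injEq] at hab
    exact Prod.ext (Fin.castLE_injective h12 hab.1) hab.2
  have hres := mySpec_bounds (Hmat Ac B Qc P R N₂) hherm _ hι
  rwa [← Hmat_submatrix Ac B Qc P R hlyap h12] at hres
end

section
/- Suppose A_c := A − BK is Schur-stable, the terminal weight P ∈ ℝ^{n×n} is symmetric positive semidefinite, and P satisfies the Lyapunov equation A_cᵀ P A_c + Q_c = P. Then: (i) every diagonal block of the condensed Hessian equals M := BᵀPB + R, i.e. (H_N)_{j,j} = BᵀPB + R for every horizon N ≥ 1 and every 0 ≤ j ≤ N−1; (ii) M is symmetric positive definite, and hence there exists a lower-triangular matrix L ∈ ℝ^{m×m} with positive diagonal entries such that L Lᵀ = M. -/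
open Matrix Filter
open scoped Kronecker

lemma posDefConj {k : Type*} [Fintype k] [DecidableEq k]
    {S N : Matrix k k ℝ} (hS : S.PosDef) (hN : Invertible N) : (N * S * Nᴴ).PosDef := by
  refine Matrix.PosDef.of_dotProduct_mulVec_pos (hS.posSemidef.mul_mul_conjTranspose_same N).isHermitian (fun x hx => ?_)
  haveI := hN
  have hy : Nᴴ *ᵥ x ≠ 0 := by
    intro h
    have := Matrix.mulVec_injective_of_invertible Nᴴ (h.trans (Matrix.mulVec_zero _).symm)
    exact hx this
  have key : star x ⬝ᵥ ((N * S * Nᴴ) *ᵥ x) = star (Nᴴ *ᵥ x) ⬝ᵥ (S *ᵥ (Nᴴ *ᵥ x)) := by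
    rw [star_mulVec, conjTranspose_conjTranspose, ← Matrix.mulVec_mulVec,
      ← Matrix.mulVec_mulVec, dotProduct_mulVec]
  rw [key]; exact hS.dotProduct_mulVec_pos hy

/-- Cholesky existence. -/
lemma cholesky {n : Type*} [Fintype n] [LinearOrder n] [LocallyFiniteOrderBot n]
    {M : Matrix n n ℝ} (hM : M.PosDef) :
    ∃ L : Matrix n n ℝ,
      (∀ i j : n, i < j → L i j = 0) ∧ (∀ i : n, 0 < L i i) ∧ L * Lᵀ = M := by
  haveI : WellFoundedLT n := Finite.to_wellFoundedLT
  haveI inst := LDL.invertibleLowerInv hM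
  have hdiagPD : (LDL.diag hM).PosDef := by
    rw [LDL.diag_eq_lowerInv_conj]
    exact posDefConj hM inst
  have hd : ∀ i, 0 < LDL.diagEntries hM i := by
    intro i
    have h := hdiagPD.dotProduct_mulVec_pos (x := Pi.single i 1) (by
      intro h
      have := congrFun h i
      simp at this)
    have heval : star (Pi.single i (1:ℝ)) ⬝ᵥ (LDL.diag hM *ᵥ Pi.single i 1)
        = LDL.diagEntries hM i := by
      rw [LDL.diag]
      simp [mulVec_single, dotProduct, Pi.single_apply]
    rwa [heval] at h
  have hLowInvTri : (LDL.lowerInv hM).BlockTriangular OrderDual.toDual := by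
    intro i j hij
    exact LDL.lowerInv_triangular hM hij
  have hLowTri : (LDL.lower hM).BlockTriangular OrderDual.toDual :=
    Matrix.blockTriangular_inv_of_blockTriangular hLowInvTri
  have h1 : LDL.lower hM * LDL.lowerInv hM = 1 := by
    rw [LDL.lower]
    exact Matrix.nonsing_inv_mul (LDL.lowerInv hM) (Matrix.isUnit_det_of_invertible _)
  have hlowdiag : ∀ i, LDL.lower hM i i ≠ 0 := by
    intro i
    have h2 : (LDL.lower hM * LDL.lowerInv hM) i i
        = LDL.lower hM i i * LDL.lowerInv hM i i := by
      rw [Matrix.mul_apply]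
      rw [Finset.sum_eq_single i]
      · intro b _ hb
        rcases lt_or_gt_of_ne hb with h | h
        · rw [hLowInvTri (show OrderDual.toDual i < OrderDual.toDual b from h), mul_zero]
        · rw [hLowTri (show OrderDual.toDual b < OrderDual.toDual i from h), zero_mul]
      · intro h; exact absurd (Finset.mem_univ i) h
    rw [h1] at h2
    intro h0
    rw [h0, zero_mul] at h2
    simp at h2
  set d : n → ℝ := fun i => Real.sqrt (LDL.diagEntries hM i) with hdDef
  set L0 : Matrix n n ℝ := LDL.lower hM * Matrix.diagonal d with hL0
  have hL0tri : L0.BlockTriangular OrderDual.toDual :=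
    hLowTri.mul (Matrix.blockTriangular_diagonal d)
  have hL0diag : ∀ i, L0 i i ≠ 0 := by
    intro i
    rw [hL0, Matrix.mul_diagonal]
    exact mul_ne_zero (hlowdiag i) (ne_of_gt (Real.sqrt_pos.mpr (hd i)))
  have hL0fac : L0 * L0ᵀ = M := by
    rw [hL0, Matrix.transpose_mul, Matrix.diagonal_transpose]
    calc LDL.lower hM * Matrix.diagonal d * (Matrix.diagonal d * (LDL.lower hM)ᵀ)
        = LDL.lower hM * (Matrix.diagonal d * Matrix.diagonal d) * (LDL.lower hM)ᵀ := by
          simp only [Matrix.mul_assoc]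
      _ = LDL.lower hM * LDL.diag hM * (LDL.lower hM)ᴴ := by
          have hDD : Matrix.diagonal (fun i => d i * d i) = LDL.diag hM := by
            ext i j
            by_cases h : i = j
            · subst h; simp [LDL.diag, Real.mul_self_sqrt (hd i).le]; exact Real.mul_self_sqrt (hd i).le
            · simp [LDL.diag, Matrix.diagonal_apply_ne _ h]
          rw [Matrix.diagonal_mul_diagonal, hDD, Matrix.conjTranspose_eq_transpose_of_trivial]
      _ = M := LDL.lower_conj_diag hM
  set ε : n → ℝ := fun i => if 0 < L0 i i then 1 else -1 with hε
  refine ⟨L0 * Matrix.diagonal ε, ?_, ?_, ?_⟩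
  · intro i j hij
    exact (hL0tri.mul (Matrix.blockTriangular_diagonal ε))
      (show OrderDual.toDual j < OrderDual.toDual i from hij)
  · intro i
    rw [Matrix.mul_diagonal, hε]
    by_cases h : 0 < L0 i i
    · simpa [h] using h
    · have hlt : L0 i i < 0 := lt_of_le_of_ne (not_lt.mp h) (hL0diag i)
      simp only [h, if_false]
      nlinarith
  · rw [Matrix.transpose_mul, Matrix.diagonal_transpose, ← Matrix.mul_assoc,
      Matrix.mul_assoc L0, Matrix.diagonal_mul_diagonal]
    have hone : Matrix.diagonal (fun i => ε i * ε i) = 1 := by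
      have : (fun i => ε i * ε i) = fun _ => (1:ℝ) := by
        funext i
        rw [hε]
        by_cases h : 0 < L0 i i <;> simp [h]
      rw [this, Matrix.diagonal_one]
    rw [hone, Matrix.mul_one, hL0fac]

/-- If `A - B*K` is Schur-stable and the symmetric positive semidefinite terminal
weight `P` solves the Lyapunov equation, then (i) every diagonal block of the condensed
Hessian equals `M = BᵀPB + R`, and (ii) `M` is symmetric positive definite, hence it
has a Cholesky factorization `M = L Lᵀ` with `L` lower triangular with positive
diagonal. -/
theorem stmt16 {n m : ℕ} (hn : 0 < n) (hm : 0 < m)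
    (A : Matrix (Fin n) (Fin n) ℝ) (B : Matrix (Fin n) (Fin m) ℝ)
    (K : Matrix (Fin m) (Fin n) ℝ)
    (Q : Matrix (Fin n) (Fin n) ℝ) (R : Matrix (Fin m) (Fin m) ℝ)
    (hQ : Q.PosSemidef) (hR : R.PosDef)
    (hstab : SchurStable (A - B * K))
    (P : Matrix (Fin n) (Fin n) ℝ) (hP : P.PosSemidef)
    (hlyap : (A - B * K)ᵀ * P * (A - B * K) + (Q + Kᵀ * R * K) = P) :
    (∀ N : ℕ, 1 ≤ N → ∀ j : Fin N,
      (Matrix.of fun a b : Fin m =>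
          Hmat (A - B * K) B (Q + Kᵀ * R * K) P R N (j, a) (j, b))
        = Bᵀ * P * B + R) ∧
    (Bᵀ * P * B + R).PosDef ∧
    ∃ L : Matrix (Fin m) (Fin m) ℝ,
      (∀ i j : Fin m, i < j → L i j = 0) ∧
      (∀ i : Fin m, 0 < L i i) ∧
      L * Lᵀ = Bᵀ * P * B + R := by
  set Ac := A - B * K with hAc
  set Qc := Q + Kᵀ * R * K with hQc
  have key : ∀ L : ℕ, (∑ i ∈ Finset.range L, (Acᵀ) ^ i * Qc * Ac ^ i)
      + (Acᵀ) ^ L * P * Ac ^ L = P := by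
    intro L
    induction L with
    | zero => simp
    | succ L ih =>
      rw [Finset.sum_range_succ]
      have h1 : (Acᵀ) ^ (L+1) * P * Ac ^ (L+1) = Acᵀ ^ L * (Acᵀ * P * Ac) * Ac ^ L := by
        rw [pow_succ, pow_succ']
        noncomm_ring
      have h2' : Qc + Acᵀ * P * Ac = P := by rw [add_comm]; exact hlyap
      have h2 : Acᵀ ^ L * Qc * Ac ^ L + Acᵀ ^ L * (Acᵀ * P * Ac) * Ac ^ L
          = Acᵀ ^ L * P * Ac ^ L := by
        calc Acᵀ ^ L * Qc * Ac ^ L + Acᵀ ^ L * (Acᵀ * P * Ac) * Ac ^ L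
            = Acᵀ ^ L * (Qc + Acᵀ * P * Ac) * Ac ^ L := by noncomm_ring
          _ = Acᵀ ^ L * P * Ac ^ L := by rw [h2']
      rw [h1, add_assoc, h2, ih]
  have hHge : ∀ N : ℕ, ∀ j : Fin N, Hge Ac B Qc P R N j j = Bᵀ * P * B + R := by
    intro N j
    unfold Hge
    simp only [Nat.add_sub_cancel]
    simp only [if_true]
    congr 1
    calc (∑ i ∈ Finset.range (N - (j:ℕ)), Bᵀ * Acᵀ ^ i * Qc * Ac ^ i * B)
          + Bᵀ * Acᵀ ^ (N - (j:ℕ)) * P * Ac ^ (N - (j:ℕ)) * B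
        = Bᵀ * ((∑ i ∈ Finset.range (N - (j:ℕ)), Acᵀ ^ i * Qc * Ac ^ i)
            + Acᵀ ^ (N - (j:ℕ)) * P * Ac ^ (N - (j:ℕ))) * B := by
          simp only [Matrix.mul_add, Matrix.add_mul, Finset.mul_sum, Finset.sum_mul,
            Matrix.mul_assoc]
          rw [Matrix.sum_mul, Matrix.mul_sum]
          simp only [Matrix.mul_assoc]
      _ = Bᵀ * P * B := by rw [key (N - (j:ℕ))]
  have hBPB : (Bᵀ * P * B).PosSemidef := by
    have h := hP.conjTranspose_mul_mul_same B
    rwa [Matrix.conjTranspose_eq_transpose_of_trivial] at h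
  have hMpd : (Bᵀ * P * B + R).PosDef := Matrix.PosDef.posSemidef_add hBPB hR
  refine ⟨?_, hMpd, cholesky hMpd⟩
  intro N hN j
  ext a b
  simp only [Matrix.of_apply, Hmat, le_refl, if_pos]
  rw [hHge N j]
end
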